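/- arXiv:2105.01973 — 8 statements merged into one kernel-verified Lean document; each statement's English description precedes it below -/
import Mathlib

section
/- Let k > m ≥ 1 be integers, let R > 0, and let 0 < ε ≤ min(2, 3R). Let λ_1, …, λ_m be distinct real numbers with |λ_j| < ε/(3R(k−m)m) for all j ∈ {1,…,m}, and let V = Vander(λ, k). Then every vector x ∈ ℝ^k with ‖x‖₂ ≤ R and xᵀV = 0 satisfies |x[i]| ≤ ε for all i ∈ {1, …, m}. -/
open Matrix

/-- The `k × m` Vandermonde-type matrix with entry `(r, c)` equal to `λ_c ^ r`
(0-indexed; in 1-indexed notation the `(r,c)` entry is `λ_c^{r-1}`). -/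
noncomputable def vander {m : ℕ} (lam : Fin m → ℝ) (k : ℕ) : Matrix (Fin k) (Fin m) ℝ :=
  fun r c => lam c ^ (r : ℕ)

lemma geom_aux {t : ℝ} (h0 : 0 ≤ t) (h3 : t ≤ 1/3) (n : ℕ) :
    ∑ v ∈ Finset.range n, t ^ v ≤ 3/2 := by
  have h1 : t < 1 := by linarith
  calc ∑ v ∈ Finset.range n, t ^ v ≤ t ^ 0 / (1 - t) := by
        rw [Finset.range_eq_Ico]
        exact geom_sum_Ico_le_of_lt_one h0 h1
    _ = 1 / (1 - t) := by norm_num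
    _ ≤ 3/2 := by
        rw [div_le_div_iff₀ (by linarith) (by norm_num)]
        linarith

lemma sum_pow_sub_le {t : ℝ} (h0 : 0 ≤ t) (h3 : t ≤ 1/3) {j m : ℕ} (hj : 1 ≤ j)
    (hjm : j ≤ m) :
    ∑ u ∈ Finset.range j, t ^ (m - u) ≤ t ^ (m - j + 1) * (3/2) := by
  rw [← Finset.sum_range_reflect]
  have hc : ∀ v ∈ Finset.range j, t ^ (m - (j - 1 - v)) = t ^ (m - j + 1) * t ^ v := by
    intro v hv
    rw [Finset.mem_range] at hv
    rw [← pow_add]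
    congr 1
    omega
  rw [Finset.sum_congr rfl hc, ← Finset.mul_sum]
  exact mul_le_mul_of_nonneg_left (geom_aux h0 h3 j) (pow_nonneg h0 _)

theorem null_space_entries_small {m k : ℕ} (hm : 1 ≤ m) (hk : m < k)
    (R ε : ℝ) (hR : 0 < R) (hε0 : 0 < ε) (hε2 : ε ≤ min 2 (3 * R))
    (lam : Fin m → ℝ) (hdist : Function.Injective lam)
    (hlam : ∀ j, |lam j| < ε / (3 * R * ((k : ℝ) - m) * m))
    (x : Fin k → ℝ) (hxnorm : Real.sqrt (∑ i, x i ^ 2) ≤ R)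
    (hnull : x ᵥ* (vander lam k) = 0) :
    ∀ i : Fin k, (i : ℕ) < m → |x i| ≤ ε := by
  intro i hi
  have hxR : ∀ r : Fin k, |x r| ≤ R := by
    intro r
    have h1 : x r ^ 2 ≤ ∑ j, x j ^ 2 :=
      Finset.single_le_sum (fun j _ => sq_nonneg (x j)) (Finset.mem_univ r)
    calc |x r| = Real.sqrt (x r ^ 2) := (Real.sqrt_sq_eq_abs _).symm
      _ ≤ Real.sqrt (∑ j, x j ^ 2) := Real.sqrt_le_sqrt h1
      _ ≤ R := hxnorm
  rcases le_total R ε with hRe | hRe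
  · exact (hxR i).trans hRe
  -- main case : ε ≤ R
  have hkm1 : (1 : ℝ) ≤ (k : ℝ) - (m : ℝ) := by
    have : ((m : ℝ) + 1) ≤ (k : ℝ) := by exact_mod_cast hk
    linarith
  have hm0 : (0 : ℝ) < (m : ℝ) := by exact_mod_cast hm
  set t : ℝ := ε / (3 * R * ((k : ℝ) - m)) with ht_def
  have hden : (0 : ℝ) < 3 * R * ((k : ℝ) - m) := by nlinarith
  have ht0 : 0 ≤ t := le_of_lt (div_pos hε0 hden)
  have ht3 : t ≤ 1 / 3 := by
    rw [ht_def, div_le_div_iff₀ hden (by norm_num)]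
    nlinarith
  have ht1 : t ≤ 1 := by linarith
  have hlamt : ∀ j, |lam j| ≤ t / m := by
    intro j
    have : t / m = ε / (3 * R * ((k : ℝ) - m) * m) := by rw [div_div]
    rw [this]
    exact (hlam j).le
  -- the polynomial with coefficients x
  set p : Polynomial ℝ := ∑ r : Fin k, Polynomial.C (x r) * Polynomial.X ^ (r : ℕ) with hp_def
  have hcoeff : ∀ n : ℕ, p.coeff n = if h : n < k then x ⟨n, h⟩ else 0 := by
    intro n
    rw [hp_def, Polynomial.finset_sum_coeff]
    simp only [Polynomial.coeff_C_mul, Polynomial.coeff_X_pow, mul_ite, mul_one, mul_zero]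
    by_cases h : n < k
    · rw [dif_pos h, Finset.sum_eq_single (⟨n, h⟩ : Fin k)]
      · simp
      · intro b _ hb
        rw [if_neg]
        intro hbn
        exact hb (by ext; exact hbn.symm)
      · simp
    · rw [dif_neg h, Finset.sum_eq_zero]
      intro b _
      rw [if_neg]
      intro hbn
      exact h (hbn ▸ b.isLt)
  have hpR : ∀ n : ℕ, |p.coeff n| ≤ R := by
    intro n
    rw [hcoeff n]
    split
    · exact hxR _
    · simp [hR.le]
  have hdegp : p.natDegree < k := by
    by_cases hp : p = 0
    · rw [hp, Polynomial.natDegree_zero]; omega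
    · by_contra hc
      push_neg at hc
      have h1 : p.coeff p.natDegree ≠ 0 := Polynomial.leadingCoeff_ne_zero.mpr hp
      exact h1 (by rw [hcoeff, dif_neg (by omega)])
  have hroot : ∀ j : Fin m, p.IsRoot (lam j) := by
    intro j
    have h0 := congrFun hnull j
    simp only [Matrix.vecMul, dotProduct, vander, Pi.zero_apply] at h0
    have : p.eval (lam j) = ∑ r : Fin k, x r * lam j ^ (r : ℕ) := by
      rw [hp_def, Polynomial.eval_finset_sum]
      simp
    rw [Polynomial.IsRoot, this]
    exact h0
  set P : Polynomial ℝ := ∏ j : Fin m, (Polynomial.X - Polynomial.C (lam j)) with hP_def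
  have hmon : P.Monic :=
    Polynomial.monic_prod_of_monic _ _ (fun j _ => Polynomial.monic_X_sub_C _)
  have hdegP : P.natDegree = m := by
    rw [hP_def, Polynomial.natDegree_prod_of_monic _ _ (fun j _ => Polynomial.monic_X_sub_C _)]
    simp
  have hdvd : P ∣ p := by
    rw [hP_def]
    refine Finset.prod_dvd_of_coprime ?_ ?_
    · exact (Polynomial.pairwise_coprime_X_sub_C hdist).set_pairwise _
    · intro j _
      exact Polynomial.dvd_iff_isRoot.mpr (hroot j)
  set q : Polynomial ℝ := p /ₘ P with hq_def
  have hpq : p = P * q := by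
    have h1 := Polynomial.modByMonic_add_div p P
    rw [(Polynomial.modByMonic_eq_zero_iff_dvd hmon).mpr hdvd, zero_add] at h1
    exact h1.symm
  have hq0 : ∀ b : ℕ, k ≤ b + m → q.coeff b = 0 := by
    intro b hb
    apply Polynomial.coeff_eq_zero_of_natDegree_lt
    rw [hq_def, Polynomial.natDegree_divByMonic _ hmon, hdegP]
    omega
  -- coefficient bound for P
  have hPcoeff : ∀ u : ℕ, u ≤ m →
      P.coeff u = (-1) ^ (m - u) *
        ∑ A ∈ Finset.powersetCard (m - u) Finset.univ, ∏ j ∈ A, lam j := by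
    intro u hu
    have h1 := Multiset.prod_X_sub_C_coeff (Finset.univ.val.map lam) (k := u)
      (by simpa using hu)
    rw [Multiset.map_map, Finset.esymm_map_val] at h1
    have hcard : Multiset.card (Finset.univ.val.map lam) = m := by
      rw [Multiset.card_map]
      exact Finset.card_fin m
    rw [hcard] at h1
    rw [hP_def, Finset.prod_eq_multiset_prod]
    exact h1
  have hPb : ∀ u : ℕ, u < m → |P.coeff u| ≤ t ^ (m - u) := by
    intro u hu
    rw [hPcoeff u hu.le, abs_mul, abs_pow, abs_neg, abs_one, one_pow, one_mul]
    have htm0 : (0:ℝ) ≤ t / m := div_nonneg ht0 hm0.le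
    calc |∑ A ∈ Finset.powersetCard (m - u) Finset.univ, ∏ j ∈ A, lam j|
        ≤ ∑ A ∈ Finset.powersetCard (m - u) Finset.univ, |∏ j ∈ A, lam j| :=
          Finset.abs_sum_le_sum_abs _ _
      _ ≤ ∑ A ∈ Finset.powersetCard (m - u) Finset.univ, (t / m) ^ (m - u) := by
          refine Finset.sum_le_sum ?_
          intro A hA
          rw [Finset.abs_prod]
          have hcard : A.card = m - u := (Finset.mem_powersetCard.mp hA).2
          calc ∏ j ∈ A, |lam j| ≤ ∏ _j ∈ A, (t / m) :=
                Finset.prod_le_prod (fun j _ => abs_nonneg _) (fun j _ => hlamt j)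
            _ = (t / m) ^ (m - u) := by rw [Finset.prod_const, hcard]
      _ = (m.choose (m - u) : ℝ) * (t / m) ^ (m - u) := by
          rw [Finset.sum_const, Finset.card_powersetCard, Finset.card_univ, Fintype.card_fin,
            nsmul_eq_mul]
      _ ≤ ((m : ℝ)) ^ (m - u) * (t / m) ^ (m - u) := by
          refine mul_le_mul_of_nonneg_right ?_ (pow_nonneg htm0 _)
          exact_mod_cast Nat.choose_le_pow m (m - u)
      _ = t ^ (m - u) := by
          rw [← mul_pow]
          congr 1
          field_simp
  have hPm : P.coeff m = 1 := by
    have := hmon.coeff_natDegree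
    rwa [hdegP] at this
  -- the recursion for coefficients of q
  have hmul : ∀ n : ℕ, p.coeff n = ∑ u ∈ Finset.range (n + 1), P.coeff u * q.coeff (n - u) := by
    intro n
    rw [hpq, Polynomial.coeff_mul, Finset.Nat.sum_antidiagonal_eq_sum_range_succ_mk]
  have hrestrict : ∀ n : ℕ, m ≤ n →
      p.coeff n = q.coeff (n - m) + ∑ u ∈ Finset.range m, P.coeff u * q.coeff (n - u) := by
    intro n hn
    rw [hmul n]
    rw [← Finset.sum_subset (Finset.range_subset_range.mpr (by omega) :
        Finset.range (m + 1) ⊆ Finset.range (n + 1))]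
    · rw [Finset.sum_range_succ, hPm, one_mul, add_comm]
    · intro u hu hnotu
      have hum : m < u := by
        rw [Finset.mem_range] at hu hnotu
        omega
      rw [Polynomial.coeff_eq_zero_of_natDegree_lt (by rw [hdegP]; exact hum), zero_mul]
  -- bound for coefficients of q, by downward induction
  have hqb : ∀ d b : ℕ, k ≤ b + m + d → |q.coeff b| ≤ 2 * R := by
    intro d
    induction d with
    | zero =>
      intro b hb
      rw [hq0 b (by omega), abs_zero]
      linarith
    | succ d ih =>
      intro b hb
      by_cases hbk : k ≤ b + m
      · rw [hq0 b hbk, abs_zero]; linarith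
      · push_neg at hbk
        have heq := hrestrict (b + m) (by omega)
        rw [show b + m - m = b by omega] at heq
        have hqcb : q.coeff b =
            p.coeff (b + m) - ∑ u ∈ Finset.range m, P.coeff u * q.coeff (b + m - u) := by
          linarith [heq]
        have hsum : |∑ u ∈ Finset.range m, P.coeff u * q.coeff (b + m - u)| ≤ R := by
          calc |∑ u ∈ Finset.range m, P.coeff u * q.coeff (b + m - u)|
              ≤ ∑ u ∈ Finset.range m, |P.coeff u * q.coeff (b + m - u)| :=
                Finset.abs_sum_le_sum_abs _ _
            _ ≤ ∑ u ∈ Finset.range m, t ^ (m - u) * (2 * R) := by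
                refine Finset.sum_le_sum ?_
                intro u hu
                rw [Finset.mem_range] at hu
                rw [abs_mul]
                refine mul_le_mul (hPb u hu) (ih (b + m - u) (by omega)) (abs_nonneg _)
                  (pow_nonneg ht0 _)
            _ = (∑ u ∈ Finset.range m, t ^ (m - u)) * (2 * R) := by
                rw [Finset.sum_mul]
            _ ≤ t ^ (m - m + 1) * (3 / 2) * (2 * R) := by
                refine mul_le_mul_of_nonneg_right (sum_pow_sub_le ht0 ht3 hm le_rfl) (by linarith)
            _ ≤ R := by
                rw [show m - m + 1 = 1 by omega, pow_one]
                nlinarith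
        calc |q.coeff b| ≤ |p.coeff (b + m)| +
              |∑ u ∈ Finset.range m, P.coeff u * q.coeff (b + m - u)| := by
                rw [hqcb]; exact abs_sub _ _
          _ ≤ R + R := add_le_add (hpR _) hsum
          _ = 2 * R := by ring
  -- final computation
  have hx_eq : x i = p.coeff (i : ℕ) := by
    rw [hcoeff, dif_pos i.isLt]
  rw [hx_eq, hmul (i : ℕ)]
  calc |∑ u ∈ Finset.range ((i : ℕ) + 1), P.coeff u * q.coeff ((i : ℕ) - u)|
      ≤ ∑ u ∈ Finset.range ((i : ℕ) + 1), |P.coeff u * q.coeff ((i : ℕ) - u)| :=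
        Finset.abs_sum_le_sum_abs _ _
    _ ≤ ∑ u ∈ Finset.range ((i : ℕ) + 1), t ^ (m - u) * (2 * R) := by
        refine Finset.sum_le_sum ?_
        intro u hu
        rw [Finset.mem_range] at hu
        rw [abs_mul]
        refine mul_le_mul (hPb u (by omega)) (hqb k ((i : ℕ) - u) (by omega)) (abs_nonneg _)
          (pow_nonneg ht0 _)
    _ = (∑ u ∈ Finset.range ((i : ℕ) + 1), t ^ (m - u)) * (2 * R) := by
        rw [Finset.sum_mul]
    _ ≤ t ^ (m - ((i : ℕ) + 1) + 1) * (3 / 2) * (2 * R) := by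
        refine mul_le_mul_of_nonneg_right
          (sum_pow_sub_le ht0 ht3 (Nat.succ_le_succ (Nat.zero_le _)) (by omega)) (by linarith)
    _ ≤ t ^ 1 * (3 / 2) * (2 * R) := by
        refine mul_le_mul_of_nonneg_right (mul_le_mul_of_nonneg_right ?_ (by norm_num))
          (by linarith)
        exact pow_le_pow_of_le_one ht0 ht1 (by omega)
    _ ≤ ε := by
        rw [pow_one]
        have h3Rt : t * (3 / 2) * (2 * R) = ε / ((k : ℝ) - m) := by
          rw [ht_def]
          field_simp
        rw [h3Rt]
        exact div_le_self hε0.le hkm1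
end

section
/- Let k > m ≥ 1 be integers, let R > 0, and let 0 < ε < min(2, 3R). Let λ_1, …, λ_m be distinct real numbers with |λ_j| < ε/(6R(k−m)m) for all j ∈ {1,…,m}, and let V = Vander(λ, k). If a, b ∈ ℝ^k satisfy ‖a‖₂ ≤ R, ‖b‖₂ ≤ R, and aᵀV = bᵀV (i.e., the degree-(k−1) polynomials with coefficient vectors a and b agree at all m evaluation points λ_1,…,λ_m), then |a[i] − b[i]| ≤ ε for all i ∈ {1, …, m}. -/
open Matrix

section Aux

open Polynomial

private lemma abs_multiset_prod_le' {δ : ℝ} (hδ : 0 ≤ δ) (t : Multiset ℝ)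
    (h : ∀ x ∈ t, |x| ≤ δ) : |t.prod| ≤ δ ^ (Multiset.card t) := by
  induction t using Multiset.induction_on with
  | empty => simp
  | cons a s ih =>
    simp only [Multiset.prod_cons, Multiset.card_cons, abs_mul, pow_succ']
    exact mul_le_mul (h a (Multiset.mem_cons_self _ _))
      (ih fun x hx => h x (Multiset.mem_cons_of_mem hx)) (abs_nonneg _) hδ

private lemma abs_multiset_esymm_le' {δ : ℝ} (hδ : 0 ≤ δ) (s : Multiset ℝ)
    (h : ∀ x ∈ s, |x| ≤ δ) (n : ℕ) :
    |s.esymm n| ≤ ((Multiset.card s).choose n : ℝ) * δ ^ n := by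
  rw [Multiset.esymm]
  refine Multiset.abs_sum_le_sum_abs.trans ?_
  have := Multiset.sum_le_card_nsmul ((s.powersetCard n).map (fun t => |t.prod|)) (δ ^ n) ?_
  · simpa [Multiset.card_powersetCard, nsmul_eq_mul] using this
  · intro x hx
    obtain ⟨t, ht, rfl⟩ := Multiset.mem_map.mp hx
    obtain ⟨hts, htc⟩ := Multiset.mem_powersetCard.mp ht
    rw [← htc]
    exact abs_multiset_prod_le' hδ t (fun x hx => h x (Multiset.mem_of_le hts hx))

private lemma coord_le_of_sqrt_sum_sq_le' {k : ℕ} {f : Fin k → ℝ} {R : ℝ}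
    (hf : Real.sqrt (∑ i, f i ^ 2) ≤ R) (r : Fin k) : |f r| ≤ R := by
  have h1 : f r ^ 2 ≤ ∑ i, f i ^ 2 :=
    Finset.single_le_sum (fun i _ => sq_nonneg (f i)) (Finset.mem_univ r)
  calc |f r| = Real.sqrt (f r ^ 2) := (Real.sqrt_sq_eq_abs _).symm
    _ ≤ Real.sqrt (∑ i, f i ^ 2) := Real.sqrt_le_sqrt h1
    _ ≤ R := hf

private lemma esum_le' {m : ℕ} (hm : 1 ≤ m) (δ : ℝ) (hδ0 : 0 < δ)
    (hmδ : (m : ℝ) * δ ≤ 1 / 2) (E : ℝ[X])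
    (hEcoeff : ∀ s : ℕ, s ≤ m → |E.coeff s| ≤ ((m.choose (m - s) : ℝ)) * δ ^ (m - s)) :
    ∑ s ∈ Finset.range m, |E.coeff s| ≤ 2 * ((m : ℝ) * δ) := by
  have hδ1 : δ ≤ 1 / 2 := le_trans (le_mul_of_one_le_left hδ0.le (by exact_mod_cast hm)) hmδ
  have hpos : (0:ℝ) < 1 - m * δ := by linarith
  have step1 : ∑ s ∈ Finset.range m, |E.coeff s|
      ≤ ∑ s ∈ Finset.range m, ((m.choose (m - s) : ℝ)) * δ ^ (m - s) :=
    Finset.sum_le_sum fun s hs => hEcoeff s (le_of_lt (Finset.mem_range.mp hs))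
  have step2 : ∑ s ∈ Finset.range m, ((m.choose (m - s) : ℝ)) * δ ^ (m - s)
      = ∑ u ∈ Finset.range m, ((m.choose (u + 1) : ℝ)) * δ ^ (u + 1) := by
    rw [← Finset.sum_range_reflect (fun u => ((m.choose (u + 1) : ℝ)) * δ ^ (u + 1)) m]
    apply Finset.sum_congr rfl
    intro s hs
    have : m - 1 - s + 1 = m - s := by
      have := Finset.mem_range.mp hs; omega
    rw [this]
  have step3 : ∑ u ∈ Finset.range m, ((m.choose (u + 1) : ℝ)) * δ ^ (u + 1)
      = (1 + δ) ^ m - 1 := by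
    have hb : (δ + 1) ^ m = ∑ u ∈ Finset.range (m + 1), δ ^ u * (m.choose u : ℝ) := by
      have := add_pow δ (1:ℝ) m
      simpa using this
    have hs : ∑ u ∈ Finset.range (m + 1), δ ^ u * (m.choose u : ℝ)
        = (∑ u ∈ Finset.range m, δ ^ (u + 1) * (m.choose (u + 1) : ℝ)) + 1 := by
      rw [Finset.sum_range_succ']
      simp
    have : (1 + δ) ^ m = (∑ u ∈ Finset.range m, δ ^ (u + 1) * (m.choose (u + 1) : ℝ)) + 1 := by
      rw [add_comm (1:ℝ) δ, hb, hs]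
    rw [this, add_sub_cancel_right]
    exact Finset.sum_congr rfl fun u _ => mul_comm _ _
  have bern : 1 - (m : ℝ) * δ ≤ (1 - δ) ^ m := by
    have := one_add_mul_le_pow (a := -δ) (by linarith) m
    have h2 : 1 + (m:ℝ) * -δ = 1 - m * δ := by ring
    rw [h2] at this
    rwa [← sub_eq_add_neg] at this
  have h2 : (1 + δ) ^ m * (1 - δ) ^ m ≤ 1 := by
    rw [← mul_pow]
    have he : (1 + δ) * (1 - δ) = 1 - δ ^ 2 := by ring
    rw [he]
    exact pow_le_one₀ (by nlinarith) (by nlinarith)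
  have h3 : (1 + δ) ^ m ≤ 1 / (1 - (m : ℝ) * δ) := by
    rw [le_div_iff₀ hpos]
    calc (1 + δ) ^ m * (1 - (m:ℝ) * δ) ≤ (1 + δ) ^ m * (1 - δ) ^ m :=
          mul_le_mul_of_nonneg_left bern (by positivity)
      _ ≤ 1 := h2
  have h4 : 1 / (1 - (m : ℝ) * δ) ≤ 1 + 2 * ((m:ℝ) * δ) := by
    rw [div_le_iff₀ hpos]
    have hp : 0 ≤ (m:ℝ) * δ := by positivity
    nlinarith [mul_nonneg hp (by linarith : (0:ℝ) ≤ 1 - 2 * ((m:ℝ)*δ))]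
  calc ∑ s ∈ Finset.range m, |E.coeff s| ≤ (1 + δ) ^ m - 1 := by
        rw [← step3, ← step2]; exact step1
    _ ≤ 2 * ((m:ℝ) * δ) := by linarith

private lemma qcoeff_le' {m k : ℕ} (hm : 1 ≤ m) (hk : m < k) (R : ℝ) (hR : 0 < R)
    (P E q : ℝ[X]) (hq : P = E * q) (hP : P ≠ 0)
    (hPdeg : P.natDegree ≤ k - 1) (hEdeg : E.natDegree = m) (hEm : E.coeff m = 1)
    (hPc : ∀ n, |P.coeff n| ≤ 2 * R)
    (hEsum : ∑ s ∈ Finset.range m, |E.coeff s| ≤ 1) :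
    ∀ t, |q.coeff t| ≤ 2 * R * ((k - m - t : ℕ) : ℝ) := by
  have hEne : E ≠ 0 := fun h => by simp [h] at hEm
  have hqne : q ≠ 0 := fun h => hP (by rw [hq, h, mul_zero])
  have hqdeg : q.natDegree ≤ k - 1 - m := by
    have := Polynomial.natDegree_mul hEne hqne
    rw [← hq, hEdeg] at this
    omega
  have hqz : ∀ t, k - m ≤ t → q.coeff t = 0 := by
    intro t ht
    exact Polynomial.coeff_eq_zero_of_natDegree_lt (by omega)
  have hrec : ∀ t, q.coeff t =
      P.coeff (m + t) - ∑ s ∈ Finset.range m, E.coeff s * q.coeff (m + t - s) := by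
    intro t
    have h1 : P.coeff (m + t) = ∑ s ∈ Finset.range (m + t + 1),
        E.coeff s * q.coeff (m + t - s) := by
      rw [hq, Polynomial.coeff_mul, Finset.Nat.sum_antidiagonal_eq_sum_range_succ_mk]
    have h2 : ∑ s ∈ Finset.range (m + 1), E.coeff s * q.coeff (m + t - s)
        = ∑ s ∈ Finset.range (m + t + 1), E.coeff s * q.coeff (m + t - s) := by
      apply Finset.sum_subset (Finset.range_subset_range.2 (by omega))
      intro x _ hx
      rw [Polynomial.coeff_eq_zero_of_natDegree_lt, zero_mul]
      rw [hEdeg]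
      simp only [Finset.mem_range, not_lt] at hx
      omega
    rw [h1, ← h2, Finset.sum_range_succ, hEm, one_mul, Nat.add_sub_cancel_left]
    ring
  have key : ∀ n t, k - m - t ≤ n → |q.coeff t| ≤ 2 * R * ((k - m - t : ℕ) : ℝ) := by
    intro n
    induction n with
    | zero =>
      intro t ht
      have h0 : k - m - t = 0 := by omega
      rw [hqz t (by omega), h0]
      simp
    | succ n ih =>
      intro t ht
      by_cases htk : k - m ≤ t
      · have h0 : k - m - t = 0 := by omega
        rw [hqz t htk, h0]
        simp
      · rw [hrec t]
        have hbound : ∀ s ∈ Finset.range m, |E.coeff s * q.coeff (m + t - s)|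
            ≤ |E.coeff s| * (2 * R * ((k - m - t - 1 : ℕ) : ℝ)) := by
          intro s hs
          rw [abs_mul]
          apply mul_le_mul_of_nonneg_left _ (abs_nonneg _)
          have hsm : s < m := Finset.mem_range.mp hs
          refine (ih (m + t - s) (by omega)).trans ?_
          apply mul_le_mul_of_nonneg_left _ (by positivity)
          exact_mod_cast Nat.cast_le.2 (by omega : k - m - (m + t - s) ≤ k - m - t - 1)
        calc |P.coeff (m + t) - ∑ s ∈ Finset.range m, E.coeff s * q.coeff (m + t - s)|
            ≤ |P.coeff (m + t)| + |∑ s ∈ Finset.range m, E.coeff s * q.coeff (m + t - s)| :=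
              abs_sub _ _
          _ ≤ 2 * R + ∑ s ∈ Finset.range m, |E.coeff s * q.coeff (m + t - s)| :=
              add_le_add (hPc _) (Finset.abs_sum_le_sum_abs _ _)
          _ ≤ 2 * R + ∑ s ∈ Finset.range m, |E.coeff s| * (2 * R * ((k - m - t - 1 : ℕ) : ℝ)) :=
              add_le_add (le_refl _) (Finset.sum_le_sum hbound)
          _ = 2 * R + (∑ s ∈ Finset.range m, |E.coeff s|) * (2 * R * ((k - m - t - 1 : ℕ) : ℝ)) := by
              rw [Finset.sum_mul]
          _ ≤ 2 * R + 1 * (2 * R * ((k - m - t - 1 : ℕ) : ℝ)) := by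
              have h0 : (0:ℝ) ≤ 2 * R * ((k - m - t - 1 : ℕ) : ℝ) := by positivity
              nlinarith
          _ = 2 * R * ((k - m - t : ℕ) : ℝ) := by
              have h1 : (k - m - t : ℕ) = (k - m - t - 1) + 1 := by omega
              rw [h1]
              push_cast
              ring
  exact fun t => key (k - m - t) t le_rfl

end Aux

open Polynomial

theorem consistent_coeffs_close {m k : ℕ} (hm : 1 ≤ m) (hk : m < k)
    (R ε : ℝ) (hR : 0 < R) (hε0 : 0 < ε) (hε2 : ε < min 2 (3 * R))
    (lam : Fin m → ℝ) (hdist : Function.Injective lam)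
    (hlam : ∀ j, |lam j| < ε / (6 * R * ((k : ℝ) - m) * m))
    (a b : Fin k → ℝ)
    (ha : Real.sqrt (∑ i, a i ^ 2) ≤ R) (hb : Real.sqrt (∑ i, b i ^ 2) ≤ R)
    (hconsistent : a ᵥ* (vander lam k) = b ᵥ* (vander lam k)) :
    ∀ i : Fin k, (i : ℕ) < m → |a i - b i| ≤ ε := by
  intro i him
  -- basic numerics
  set δ : ℝ := ε / (6 * R * ((k : ℝ) - m) * m) with hδdef
  have hm1 : (1 : ℝ) ≤ (m : ℝ) := by exact_mod_cast hm
  have hkm1 : (1 : ℝ) ≤ (k : ℝ) - (m : ℝ) := by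
    have : (m : ℝ) + 1 ≤ (k : ℝ) := by exact_mod_cast hk
    linarith
  have hδ0 : 0 < δ := by apply div_pos hε0; positivity
  have hε3R : ε < 3 * R := lt_of_lt_of_le hε2 (min_le_right _ _)
  have hmδeq : (m : ℝ) * δ = ε / (6 * R * ((k : ℝ) - m)) := by
    rw [hδdef]; field_simp
  have hmδ : (m : ℝ) * δ ≤ 1 / 2 := by
    rw [hmδeq, div_le_iff₀ (by positivity)]
    nlinarith
  -- coefficients
  set c : Fin k → ℝ := fun r => a r - b r with hcdef
  have hc2R : ∀ r, |c r| ≤ 2 * R := by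
    intro r
    calc |c r| ≤ |a r| + |b r| := abs_sub _ _
      _ ≤ 2 * R := by
          have := coord_le_of_sqrt_sum_sq_le' ha r
          have := coord_le_of_sqrt_sum_sq_le' hb r
          linarith
  -- the polynomial
  set P : ℝ[X] := ∑ r : Fin k, C (c r) * X ^ (r : ℕ) with hPdef
  have hPcoeff : ∀ n : ℕ, P.coeff n = if h : n < k then c ⟨n, h⟩ else 0 := by
    intro n
    rw [hPdef, finset_sum_coeff]
    simp only [coeff_C_mul, coeff_X_pow]
    split
    · next h =>
      rw [Finset.sum_eq_single (⟨n, h⟩ : Fin k)]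
      · simp
      · intro r _ hr
        rw [if_neg, mul_zero]
        intro hnr
        exact hr (Fin.ext hnr.symm)
      · intro h; exact absurd (Finset.mem_univ _) h
    · next h =>
      apply Finset.sum_eq_zero
      intro r _
      rw [if_neg, mul_zero]
      intro hnr
      exact h (hnr ▸ r.isLt)
  have hPc : ∀ n, |P.coeff n| ≤ 2 * R := by
    intro n
    rw [hPcoeff]
    split
    · exact hc2R _
    · simp; positivity
  have hPdeg : P.natDegree ≤ k - 1 := by
    rw [natDegree_le_iff_coeff_eq_zero]
    intro N hN
    rw [hPcoeff, dif_neg]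
    omega
  have hPeval : ∀ j, P.eval (lam j) = 0 := by
    intro j
    have h := congrFun hconsistent j
    simp only [vecMul, dotProduct, vander] at h
    rw [hPdef]
    simp only [eval_finset_sum, eval_mul, eval_C, eval_pow, eval_X]
    have : ∀ r : Fin k, c r * lam j ^ (r : ℕ) = a r * lam j ^ (r : ℕ) - b r * lam j ^ (r : ℕ) := by
      intro r; rw [hcdef]; ring
    rw [Finset.sum_congr rfl (fun r _ => this r), Finset.sum_sub_distrib, h, sub_self]
  have hci : a i - b i = P.coeff i := by
    rw [hPcoeff, dif_pos i.isLt, hcdef]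
  -- trivial case P = 0
  by_cases hP : P = 0
  · rw [hci, hP]
    simpa using hε0.le
  -- the root factor polynomial
  set S : Multiset ℝ := Finset.univ.val.map lam with hSdef
  have hScard : Multiset.card S = m := by simp [hSdef]
  have hSmem : ∀ x ∈ S, |x| ≤ δ := by
    intro x hx
    obtain ⟨j, _, rfl⟩ := Multiset.mem_map.mp hx
    exact (hlam j).le
  set E : ℝ[X] := ∏ j : Fin m, (X - C (lam j)) with hEdef
  have hE_eq : E = (S.map fun x => X - C x).prod := by
    rw [hEdef, hSdef, Multiset.map_map, Finset.prod_eq_multiset_prod]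
    rfl
  have hEmonic : E.Monic := monic_prod_of_monic _ _ (fun j _ => monic_X_sub_C _)
  have hEdeg : E.natDegree = m := by
    rw [hEdef, natDegree_prod _ _ (fun j _ => X_sub_C_ne_zero (lam j))]
    simp
  have hEm : E.coeff m = 1 := by
    have := hEmonic.coeff_natDegree
    rwa [hEdeg] at this
  have hEcoeff : ∀ s : ℕ, s ≤ m → |E.coeff s| ≤ ((m.choose (m - s) : ℝ)) * δ ^ (m - s) := by
    intro s hs
    rw [hE_eq, Multiset.prod_X_sub_C_coeff S (by rw [hScard]; exact hs)]
    rw [abs_mul, abs_pow, abs_neg, abs_one, one_pow, one_mul, hScard]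
    rw [← hScard]
    exact abs_multiset_esymm_le' hδ0.le S hSmem _
  have hEsum : ∑ s ∈ Finset.range m, |E.coeff s| ≤ 2 * ((m : ℝ) * δ) :=
    esum_le' hm δ hδ0 hmδ E hEcoeff
  have hdvd : E ∣ P := by
    rw [hE_eq, Multiset.prod_X_sub_C_dvd_iff_le_roots hP]
    have hnodup : S.Nodup := Multiset.Nodup.map hdist Finset.univ.nodup
    rw [Multiset.le_iff_subset hnodup]
    intro x hx
    obtain ⟨j, _, rfl⟩ := Multiset.mem_map.mp hx
    rw [mem_roots hP]
    exact hPeval j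
  obtain ⟨q, hq⟩ := hdvd
  have hqb : ∀ t, |q.coeff t| ≤ 2 * R * ((k - m - t : ℕ) : ℝ) :=
    qcoeff_le' hm hk R hR P E q hq hP hPdeg hEdeg hEm hPc (by linarith)
  -- final estimate
  have hfin : P.coeff (i : ℕ) = ∑ s ∈ Finset.range ((i : ℕ) + 1),
      E.coeff s * q.coeff ((i : ℕ) - s) := by
    rw [hq, coeff_mul, Finset.Nat.sum_antidiagonal_eq_sum_range_succ_mk]
  have hqN : ∀ u : ℕ, |q.coeff u| ≤ 2 * R * ((k - m : ℕ) : ℝ) := by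
    intro u
    refine (hqb u).trans ?_
    apply mul_le_mul_of_nonneg_left _ (by positivity)
    exact_mod_cast Nat.cast_le.2 (Nat.sub_le _ _)
  have hbig : |P.coeff (i : ℕ)| ≤ 2 * ((m : ℝ) * δ) * (2 * R * ((k - m : ℕ) : ℝ)) := by
    rw [hfin]
    calc |∑ s ∈ Finset.range ((i : ℕ) + 1), E.coeff s * q.coeff ((i : ℕ) - s)|
        ≤ ∑ s ∈ Finset.range ((i : ℕ) + 1), |E.coeff s * q.coeff ((i : ℕ) - s)| :=
          Finset.abs_sum_le_sum_abs _ _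
      _ ≤ ∑ s ∈ Finset.range ((i : ℕ) + 1), |E.coeff s| * (2 * R * ((k - m : ℕ) : ℝ)) := by
          refine Finset.sum_le_sum fun s _ => ?_
          rw [abs_mul]
          exact mul_le_mul_of_nonneg_left (hqN _) (abs_nonneg _)
      _ ≤ ∑ s ∈ Finset.range m, |E.coeff s| * (2 * R * ((k - m : ℕ) : ℝ)) := by
          apply Finset.sum_le_sum_of_subset_of_nonneg
          · exact Finset.range_subset_range.2 (by omega)
          · intro s _ _
            positivity
      _ = (∑ s ∈ Finset.range m, |E.coeff s|) * (2 * R * ((k - m : ℕ) : ℝ)) := by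
          rw [Finset.sum_mul]
      _ ≤ 2 * ((m : ℝ) * δ) * (2 * R * ((k - m : ℕ) : ℝ)) := by
          apply mul_le_mul_of_nonneg_right hEsum (by positivity)
  have hkmcast : ((k - m : ℕ) : ℝ) = (k : ℝ) - (m : ℝ) := by
    rw [Nat.cast_sub hk.le]
  have hval : 2 * ((m : ℝ) * δ) * (2 * R * ((k - m : ℕ) : ℝ)) = 2 / 3 * ε := by
    rw [hkmcast, hmδeq]
    have hne : 6 * R * ((k : ℝ) - m) ≠ 0 := by positivity
    field_simp
    ring
  rw [hci]
  rw [hval] at hbig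
  linarith [abs_nonneg (P.coeff (i : ℕ))]
end

section
/- Suppose m divides n, A ∈ ℝ^{n×n} is partitioned into column blocks A_1,…,A_m ∈ ℝ^{n×(n/m)} and B ∈ ℝ^{n×n} into row blocks B_1,…,B_m ∈ ℝ^{(n/m)×n}, and ‖A‖_F ≤ η, ‖B‖_F ≤ η. Then for every entry position (v,w) with v,w ∈ {1,…,n}, the vector of MatDot coefficients at that entry satisfies (Σ_{l=1}^{2m−1} P_l[v,w]²)^{1/2} ≤ √(2m−1) · η². -/
open Matrix

/-- Frobenius norm of a real matrix. -/
noncomputable def frobNorm {α β : Type*} [Fintype α] [Fintype β] (M : Matrix α β ℝ) : ℝ :=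
  Real.sqrt (∑ i, ∑ j, M i j ^ 2)

/-- The `i`-th column block `A_i ∈ ℝ^{n × (n/m)}` of `A ∈ ℝ^{n × n}` (with `n = m * t`,
columns indexed as `Fin m × Fin t`). Here `i : Fin m` is 0-indexed. -/
def colBlk {m t : ℕ} (A : Matrix (Fin (m * t)) (Fin m × Fin t) ℝ) (i : Fin m) :
    Matrix (Fin (m * t)) (Fin t) ℝ :=
  Matrix.of fun v c => A v (i, c)

/-- The `j`-th row block `B_j ∈ ℝ^{(n/m) × n}` of `B ∈ ℝ^{n × n}`. -/
def rowBlk {m t : ℕ} (B : Matrix (Fin m × Fin t) (Fin (m * t)) ℝ) (j : Fin m) :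
    Matrix (Fin t) (Fin (m * t)) ℝ :=
  Matrix.of fun c w => B (j, c) w

/-- The `l`-th MatDot coefficient matrix (`l` is 1-indexed, `l ∈ {1, …, 2m-1}`):
`P_l = Σ_{i,j ∈ {1,…,m}, i − j = l − m} A_i B_j`.  Here the blocks `i j : Fin m` are
0-indexed, so the defining condition `(i+1) − (j+1) = l − m` reads `i − j = l − m` in `ℤ`. -/
noncomputable def matDotCoeff {m t : ℕ}
    (A : Matrix (Fin (m * t)) (Fin m × Fin t) ℝ)
    (B : Matrix (Fin m × Fin t) (Fin (m * t)) ℝ) (l : ℕ) :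
    Matrix (Fin (m * t)) (Fin (m * t)) ℝ :=
  ∑ i : Fin m, ∑ j : Fin m,
    if (i : ℤ) - (j : ℤ) = (l : ℤ) - (m : ℤ) then colBlk A i * rowBlk B j else 0

lemma matdot_entry_abs_le {m t : ℕ} {η : ℝ}
    (A : Matrix (Fin (m * t)) (Fin m × Fin t) ℝ)
    (B : Matrix (Fin m × Fin t) (Fin (m * t)) ℝ)
    (hA : frobNorm A ≤ η) (hB : frobNorm B ≤ η) (l : ℕ) (v w : Fin (m * t)) :
    |matDotCoeff A B l v w| ≤ η ^ 2 := by
  have hη : 0 ≤ η := le_trans (Real.sqrt_nonneg _) hA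
  -- Frobenius norm squared bounds
  have hA2 : (∑ v' : Fin (m * t), ∑ p : Fin m × Fin t, A v' p ^ 2) ≤ η ^ 2 := by
    have hnn : (0:ℝ) ≤ ∑ v' : Fin (m * t), ∑ p : Fin m × Fin t, A v' p ^ 2 :=
      Finset.sum_nonneg fun _ _ => Finset.sum_nonneg fun _ _ => sq_nonneg _
    calc (∑ v' : Fin (m * t), ∑ p : Fin m × Fin t, A v' p ^ 2)
        = (frobNorm A) ^ 2 := (Real.sq_sqrt hnn).symm
      _ ≤ η ^ 2 := pow_le_pow_left₀ (Real.sqrt_nonneg _) hA 2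
  have hB2 : (∑ p : Fin m × Fin t, ∑ w' : Fin (m * t), B p w' ^ 2) ≤ η ^ 2 := by
    have hnn : (0:ℝ) ≤ ∑ p : Fin m × Fin t, ∑ w' : Fin (m * t), B p w' ^ 2 :=
      Finset.sum_nonneg fun _ _ => Finset.sum_nonneg fun _ _ => sq_nonneg _
    calc (∑ p : Fin m × Fin t, ∑ w' : Fin (m * t), B p w' ^ 2)
        = (frobNorm B) ^ 2 := (Real.sq_sqrt hnn).symm
      _ ≤ η ^ 2 := pow_le_pow_left₀ (Real.sqrt_nonneg _) hB 2
  -- row/column slice bounds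
  have hArow : (∑ p : Fin m × Fin t, A v p ^ 2) ≤ η ^ 2 := by
    refine le_trans ?_ hA2
    exact Finset.single_le_sum (f := fun v' => ∑ p : Fin m × Fin t, A v' p ^ 2)
      (fun _ _ => Finset.sum_nonneg fun _ _ => sq_nonneg _) (Finset.mem_univ v)
  have hBcol : (∑ p : Fin m × Fin t, B p w ^ 2) ≤ η ^ 2 := by
    have := Finset.sum_le_sum (s := (Finset.univ : Finset (Fin m × Fin t)))
      (f := fun p => B p w ^ 2) (g := fun p => ∑ w' : Fin (m*t), B p w' ^ 2)
      (fun p _ => Finset.single_le_sum (f := fun w' => B p w' ^ 2)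
        (fun _ _ => sq_nonneg _) (Finset.mem_univ w))
    exact le_trans this hB2
  -- express the entry as an inner product
  set C : Fin m → Fin m → Prop := fun i j => (i : ℤ) - (j : ℤ) = (l : ℤ) - (m : ℤ) with hC
  have hCdec : ∀ i j, Decidable (C i j) := fun i j => by rw [hC]; infer_instance
  set f : Fin m × Fin m × Fin t → ℝ := fun p =>
    if (p.1 : ℤ) - (p.2.1 : ℤ) = (l : ℤ) - (m : ℤ) then A v (p.1, p.2.2) else 0 with hf
  set g : Fin m × Fin m × Fin t → ℝ := fun p =>
    if (p.1 : ℤ) - (p.2.1 : ℤ) = (l : ℤ) - (m : ℤ) then B (p.2.1, p.2.2) w else 0 with hg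
  have hentry : matDotCoeff A B l v w = ∑ p : Fin m × Fin m × Fin t, f p * g p := by
    rw [Fintype.sum_prod_type]
    simp only [matDotCoeff, Matrix.sum_apply]
    refine Finset.sum_congr rfl fun i _ => ?_
    rw [Fintype.sum_prod_type]
    refine Finset.sum_congr rfl fun j _ => ?_
    by_cases h : (i : ℤ) - (j : ℤ) = (l : ℤ) - (m : ℤ)
    · simp only [hf, hg, h, if_pos, if_true]
      simp [Matrix.mul_apply, colBlk, rowBlk]
    · simp [hf, hg, h]
  -- Cauchy-Schwarz
  have hcs := Finset.sum_mul_sq_le_sq_mul_sq Finset.univ f g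
  -- bound sum of f^2
  have hcard : ∀ (P : Fin m → Prop) [DecidablePred P],
      (∀ a b, P a → P b → a = b) → ∀ (x : ℝ), 0 ≤ x →
      (∑ j : Fin m, if P j then x else 0) ≤ x := by
    intro P _ huniq x hx
    rw [← Finset.sum_filter, Finset.sum_const]
    have : (Finset.univ.filter P).card ≤ 1 := Finset.card_le_one.mpr
      (fun a ha b hb => huniq a b (Finset.mem_filter.mp ha).2 (Finset.mem_filter.mp hb).2)
    calc ((Finset.univ.filter P).card : ℕ) • x ≤ 1 • x := by
          exact nsmul_le_nsmul_left hx this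
      _ = x := one_smul _ _
  have hf2 : (∑ p : Fin m × Fin m × Fin t, f p ^ 2) ≤ η ^ 2 := by
    rw [Fintype.sum_prod_type]
    have step : ∀ i : Fin m, (∑ q : Fin m × Fin t, f (i, q) ^ 2)
        ≤ ∑ c : Fin t, A v (i, c) ^ 2 := by
      intro i
      rw [Fintype.sum_prod_type, Finset.sum_comm]
      refine Finset.sum_le_sum fun c _ => ?_
      have : (∑ j : Fin m, f (i, j, c) ^ 2)
          = ∑ j : Fin m, if (i : ℤ) - (j : ℤ) = (l : ℤ) - (m : ℤ)
              then A v (i, c) ^ 2 else 0 := by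
        refine Finset.sum_congr rfl fun j _ => ?_
        by_cases h : (i : ℤ) - (j : ℤ) = (l : ℤ) - (m : ℤ) <;> simp [hf, h]
      rw [this]
      refine hcard _ (fun a b ha hb => ?_) _ (sq_nonneg _)
      have : (a : ℤ) = (b : ℤ) := by omega
      exact Fin.ext (by exact_mod_cast this)
    calc (∑ i : Fin m, ∑ q : Fin m × Fin t, f (i, q) ^ 2)
        ≤ ∑ i : Fin m, ∑ c : Fin t, A v (i, c) ^ 2 := Finset.sum_le_sum fun i _ => step i
      _ = ∑ p : Fin m × Fin t, A v p ^ 2 := by rw [Fintype.sum_prod_type]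
      _ ≤ η ^ 2 := hArow
  have hg2 : (∑ p : Fin m × Fin m × Fin t, g p ^ 2) ≤ η ^ 2 := by
    have swap : (∑ p : Fin m × Fin m × Fin t, g p ^ 2)
        = ∑ j : Fin m, ∑ c : Fin t, ∑ i : Fin m, g (i, j, c) ^ 2 := by
      rw [Fintype.sum_prod_type]
      simp_rw [Fintype.sum_prod_type]
      rw [Finset.sum_comm]
      exact Finset.sum_congr rfl fun j _ => Finset.sum_comm
    rw [swap]
    have step : ∀ (j : Fin m) (c : Fin t), (∑ i : Fin m, g (i, j, c) ^ 2)
        ≤ B (j, c) w ^ 2 := by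
      intro j c
      have : (∑ i : Fin m, g (i, j, c) ^ 2)
          = ∑ i : Fin m, if (i : ℤ) - (j : ℤ) = (l : ℤ) - (m : ℤ)
              then B (j, c) w ^ 2 else 0 := by
        refine Finset.sum_congr rfl fun i _ => ?_
        by_cases h : (i : ℤ) - (j : ℤ) = (l : ℤ) - (m : ℤ) <;> simp [hg, h]
      rw [this]
      refine hcard _ (fun a b ha hb => ?_) _ (sq_nonneg _)
      have : (a : ℤ) = (b : ℤ) := by omega
      exact Fin.ext (by exact_mod_cast this)
    calc (∑ j : Fin m, ∑ c : Fin t, ∑ i : Fin m, g (i, j, c) ^ 2)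
        ≤ ∑ j : Fin m, ∑ c : Fin t, B (j, c) w ^ 2 :=
          Finset.sum_le_sum fun j _ => Finset.sum_le_sum fun c _ => step j c
      _ = ∑ p : Fin m × Fin t, B p w ^ 2 := by rw [Fintype.sum_prod_type]
      _ ≤ η ^ 2 := hBcol
  have hnn2 : (0:ℝ) ≤ ∑ p : Fin m × Fin m × Fin t, g p ^ 2 :=
    Finset.sum_nonneg fun _ _ => sq_nonneg _
  have hsq : (matDotCoeff A B l v w) ^ 2 ≤ (η ^ 2) ^ 2 := by
    rw [hentry]
    calc (∑ p : Fin m × Fin m × Fin t, f p * g p) ^ 2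
        ≤ (∑ p, f p ^ 2) * (∑ p, g p ^ 2) := hcs
      _ ≤ η ^ 2 * η ^ 2 := mul_le_mul hf2 hg2 hnn2 (sq_nonneg _)
      _ = (η ^ 2) ^ 2 := (sq (η ^ 2)).symm
  calc |matDotCoeff A B l v w| = Real.sqrt ((matDotCoeff A B l v w) ^ 2) :=
        (Real.sqrt_sq_eq_abs _).symm
    _ ≤ Real.sqrt ((η ^ 2) ^ 2) := Real.sqrt_le_sqrt hsq
    _ = η ^ 2 := Real.sqrt_sq (sq_nonneg _)

theorem matdot_coeff_vector_norm_bound {m t : ℕ} (hm : 1 ≤ m) (η : ℝ)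
    (A : Matrix (Fin (m * t)) (Fin m × Fin t) ℝ)
    (B : Matrix (Fin m × Fin t) (Fin (m * t)) ℝ)
    (hA : frobNorm A ≤ η) (hB : frobNorm B ≤ η) :
    ∀ v w : Fin (m * t),
      Real.sqrt (∑ l ∈ Finset.Icc 1 (2 * m - 1), (matDotCoeff A B l v w) ^ 2)
        ≤ Real.sqrt (2 * (m : ℝ) - 1) * η ^ 2 := by
  intro v w
  have hη : 0 ≤ η := le_trans (Real.sqrt_nonneg _) hA
  have hsum : (∑ l ∈ Finset.Icc 1 (2 * m - 1), (matDotCoeff A B l v w) ^ 2)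
      ≤ (2 * (m:ℝ) - 1) * (η ^ 2) ^ 2 := by
    have hbd : ∀ l ∈ Finset.Icc 1 (2 * m - 1), (matDotCoeff A B l v w) ^ 2 ≤ (η ^ 2) ^ 2 := by
      intro l _
      have := matdot_entry_abs_le A B hA hB l v w
      calc (matDotCoeff A B l v w) ^ 2 = |matDotCoeff A B l v w| ^ 2 := (sq_abs _).symm
        _ ≤ (η ^ 2) ^ 2 := pow_le_pow_left₀ (abs_nonneg _) this 2
    calc (∑ l ∈ Finset.Icc 1 (2 * m - 1), (matDotCoeff A B l v w) ^ 2)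
        ≤ ∑ l ∈ Finset.Icc 1 (2 * m - 1), (η ^ 2) ^ 2 := Finset.sum_le_sum hbd
      _ = ((2 * m - 1 : ℕ) : ℝ) * (η ^ 2) ^ 2 := by
          rw [Finset.sum_const, Nat.card_Icc]; simp [nsmul_eq_mul]
      _ = (2 * (m:ℝ) - 1) * (η ^ 2) ^ 2 := by
          congr 1
          have h2m : 1 ≤ 2 * m := by omega
          push_cast [Nat.cast_sub h2m]
          ring
  calc Real.sqrt (∑ l ∈ Finset.Icc 1 (2 * m - 1), (matDotCoeff A B l v w) ^ 2)
      ≤ Real.sqrt ((2 * (m:ℝ) - 1) * (η ^ 2) ^ 2) := Real.sqrt_le_sqrt hsum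
    _ = Real.sqrt (2 * (m:ℝ) - 1) * Real.sqrt ((η ^ 2) ^ 2) := by
        apply Real.sqrt_mul
        have : (1:ℝ) ≤ (m:ℝ) := by exact_mod_cast hm
        linarith
    _ = Real.sqrt (2 * (m:ℝ) - 1) * η ^ 2 := by rw [Real.sqrt_sq (sq_nonneg _)]
end

section
/- Suppose m divides n, A ∈ ℝ^{n×n} is partitioned into column blocks A_1,…,A_m ∈ ℝ^{n×(n/m)} and B ∈ ℝ^{n×n} into row blocks B_1,…,B_m ∈ ℝ^{(n/m)×n}, and ‖A‖_F ≤ η, ‖B‖_F ≤ η. Then every MatDot coefficient matrix satisfies ‖P_l‖_F ≤ η² for each l ∈ {1,…,2m−1}. -/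
open Matrix

lemma frobNorm_nonneg {α β : Type*} [Fintype α] [Fintype β] (M : Matrix α β ℝ) :
    0 ≤ frobNorm M := Real.sqrt_nonneg _

lemma sq_frobNorm {α β : Type*} [Fintype α] [Fintype β] (M : Matrix α β ℝ) :
    frobNorm M ^ 2 = ∑ i, ∑ j, M i j ^ 2 :=
  Real.sq_sqrt (Finset.sum_nonneg fun _ _ => Finset.sum_nonneg fun _ _ => sq_nonneg _)

noncomputable def toEuc {α β : Type*} [Fintype α] [Fintype β] :
    Matrix α β ℝ →ₗ[ℝ] EuclideanSpace ℝ (α × β) where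
  toFun M := WithLp.toLp 2 (fun p : α × β => M p.1 p.2)
  map_add' _ _ := rfl
  map_smul' _ _ := rfl

lemma frobNorm_eq {α β : Type*} [Fintype α] [Fintype β] (M : Matrix α β ℝ) :
    frobNorm M = ‖toEuc M‖ := by
  rw [EuclideanSpace.norm_eq, frobNorm]
  congr 1
  rw [Fintype.sum_prod_type]
  simp only [toEuc, LinearMap.coe_mk, AddHom.coe_mk, WithLp.ofLp_toLp, Real.norm_eq_abs, sq_abs]
  rfl

lemma frobNorm_sum_le {α β ι : Type*} [Fintype α] [Fintype β] (s : Finset ι)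
    (f : ι → Matrix α β ℝ) : frobNorm (∑ p ∈ s, f p) ≤ ∑ p ∈ s, frobNorm (f p) := by
  rw [frobNorm_eq, map_sum]
  exact (norm_sum_le _ _).trans (le_of_eq (by simp [frobNorm_eq]))

lemma frobNorm_mul_le {α β γ : Type*} [Fintype α] [Fintype β] [Fintype γ]
    (M : Matrix α β ℝ) (N : Matrix β γ ℝ) :
    frobNorm (M * N) ≤ frobNorm M * frobNorm N := by
  have key : frobNorm (M * N) ^ 2 ≤ (frobNorm M * frobNorm N) ^ 2 := by
    rw [sq_frobNorm, mul_pow, sq_frobNorm, sq_frobNorm]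
    calc ∑ i, ∑ j, (M * N) i j ^ 2
        ≤ ∑ i, ∑ j, (∑ k, M i k ^ 2) * (∑ k, N k j ^ 2) := by
          refine Finset.sum_le_sum fun i _ => Finset.sum_le_sum fun j _ => ?_
          simpa [Matrix.mul_apply] using
            Finset.sum_mul_sq_le_sq_mul_sq Finset.univ (fun k => M i k) (fun k => N k j)
      _ = (∑ i, ∑ k, M i k ^ 2) * (∑ k, ∑ j, N k j ^ 2) := by
          rw [Finset.sum_comm (f := fun k j => N k j ^ 2), ← Finset.sum_mul_sum]
  have h := Real.sqrt_le_sqrt key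
  rwa [Real.sqrt_sq (frobNorm_nonneg _),
    Real.sqrt_sq (mul_nonneg (frobNorm_nonneg M) (frobNorm_nonneg N))] at h

lemma colBlk_sq_sum {m t : ℕ} (A : Matrix (Fin (m * t)) (Fin m × Fin t) ℝ) :
    ∑ i : Fin m, frobNorm (colBlk A i) ^ 2 = frobNorm A ^ 2 := by
  simp only [sq_frobNorm, colBlk, Matrix.of_apply]
  rw [Finset.sum_comm]
  congr 1; ext v
  rw [Fintype.sum_prod_type]

lemma rowBlk_sq_sum {m t : ℕ} (B : Matrix (Fin m × Fin t) (Fin (m * t)) ℝ) :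
    ∑ j : Fin m, frobNorm (rowBlk B j) ^ 2 = frobNorm B ^ 2 := by
  simp only [sq_frobNorm, rowBlk, Matrix.of_apply]
  rw [Fintype.sum_prod_type]

theorem matdot_coeff_frobenius_bound {m t : ℕ} (hm : 1 ≤ m) (η : ℝ)
    (A : Matrix (Fin (m * t)) (Fin m × Fin t) ℝ)
    (B : Matrix (Fin m × Fin t) (Fin (m * t)) ℝ)
    (hA : frobNorm A ≤ η) (hB : frobNorm B ≤ η) :
    ∀ l ∈ Finset.Icc 1 (2 * m - 1), frobNorm (matDotCoeff A B l) ≤ η ^ 2 := by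
  intro l _
  set S : Finset (Fin m × Fin m) :=
    Finset.univ.filter (fun p => (p.1 : ℤ) - (p.2 : ℤ) = (l : ℤ) - (m : ℤ)) with hS
  have hP : matDotCoeff A B l = ∑ p ∈ S, colBlk A p.1 * rowBlk B p.2 := by
    rw [matDotCoeff, ← Finset.sum_product', hS, Finset.sum_filter,
      ← Finset.univ_product_univ]
  have hη : 0 ≤ η := le_trans (frobNorm_nonneg A) hA
  have h1 : frobNorm (matDotCoeff A B l) ≤
      ∑ p ∈ S, frobNorm (colBlk A p.1) * frobNorm (rowBlk B p.2) := by
    rw [hP]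
    exact (frobNorm_sum_le _ _).trans
      (Finset.sum_le_sum fun p _ => frobNorm_mul_le _ _)
  have h2 := Finset.sum_mul_sq_le_sq_mul_sq S
    (fun p => frobNorm (colBlk A p.1)) (fun p => frobNorm (rowBlk B p.2))
  have hAinj : ∑ p ∈ S, frobNorm (colBlk A p.1) ^ 2 ≤
      ∑ i : Fin m, frobNorm (colBlk A i) ^ 2 := by
    have hinj : ∀ p ∈ S, ∀ q ∈ S, p.1 = q.1 → p = q := by
      intro p hp q hq hpq
      simp only [hS, Finset.mem_filter] at hp hq
      have : (p.2 : ℤ) = (q.2 : ℤ) := by omega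
      exact Prod.ext hpq (Fin.ext (by exact_mod_cast this))
    have heq : ∑ i ∈ S.image Prod.fst, frobNorm (colBlk A i) ^ 2
        = ∑ p ∈ S, frobNorm (colBlk A p.1) ^ 2 := Finset.sum_image hinj
    rw [← heq]
    exact Finset.sum_le_sum_of_subset_of_nonneg (Finset.subset_univ _)
      (fun _ _ _ => sq_nonneg _)
  have hBinj : ∑ p ∈ S, frobNorm (rowBlk B p.2) ^ 2 ≤
      ∑ j : Fin m, frobNorm (rowBlk B j) ^ 2 := by
    have hinj : ∀ p ∈ S, ∀ q ∈ S, p.2 = q.2 → p = q := by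
      intro p hp q hq hpq
      simp only [hS, Finset.mem_filter] at hp hq
      have : (p.1 : ℤ) = (q.1 : ℤ) := by omega
      exact Prod.ext (Fin.ext (by exact_mod_cast this)) hpq
    have heq : ∑ j ∈ S.image Prod.snd, frobNorm (rowBlk B j) ^ 2
        = ∑ p ∈ S, frobNorm (rowBlk B p.2) ^ 2 := Finset.sum_image hinj
    rw [← heq]
    exact Finset.sum_le_sum_of_subset_of_nonneg (Finset.subset_univ _)
      (fun _ _ _ => sq_nonneg _)
  have hA2 : frobNorm A ^ 2 ≤ η ^ 2 := pow_le_pow_left₀ (frobNorm_nonneg A) hA 2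
  have hB2 : frobNorm B ^ 2 ≤ η ^ 2 := pow_le_pow_left₀ (frobNorm_nonneg B) hB 2
  have hs1 : 0 ≤ ∑ p ∈ S, frobNorm (colBlk A p.1) * frobNorm (rowBlk B p.2) :=
    Finset.sum_nonneg fun p _ => mul_nonneg (frobNorm_nonneg _) (frobNorm_nonneg _)
  have hkey : (∑ p ∈ S, frobNorm (colBlk A p.1) * frobNorm (rowBlk B p.2)) ^ 2 ≤
      (η ^ 2) ^ 2 := by
    calc (∑ p ∈ S, frobNorm (colBlk A p.1) * frobNorm (rowBlk B p.2)) ^ 2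
        ≤ (∑ p ∈ S, frobNorm (colBlk A p.1) ^ 2) *
          (∑ p ∈ S, frobNorm (rowBlk B p.2) ^ 2) := h2
      _ ≤ (η ^ 2) ^ 2 := by
          have := colBlk_sq_sum A
          have := rowBlk_sq_sum B
          nlinarith [Finset.sum_nonneg (s := S)
              (f := fun p => frobNorm (colBlk A p.1) ^ 2) (fun p _ => sq_nonneg _),
            Finset.sum_nonneg (s := S)
              (f := fun p => frobNorm (rowBlk B p.2) ^ 2) (fun p _ => sq_nonneg _),
            sq_nonneg η, sq_nonneg (frobNorm A), sq_nonneg (frobNorm B)]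
  have h3 := Real.sqrt_le_sqrt hkey
  rw [Real.sqrt_sq hs1, Real.sqrt_sq (sq_nonneg η)] at h3
  exact h1.trans h3
end

section
/- Let k > m ≥ 1 be integers, let a_0,…,a_{k−1} ∈ ℝ, and let f(x) = Σ_{j=0}^{k−1} a_j x^j. Let x_1,…,x_m be distinct real numbers satisfying |x_i| ≤ δ for all i, where 0 < δ < 1/m. Let V be the m×m Vandermonde matrix with V[i,j] = x_i^{j−1} (which is invertible since the x_i are distinct), and define (â_0,…,â_{m−1})ᵀ = V⁻¹ (f(x_1),…,f(x_m))ᵀ. Then |â_{m−1} − a_{m−1}| ≤ (max_{0≤j≤k−1} |a_j|) · (k−m) · m · δ. -/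
def Hc : List ℝ → ℕ → ℝ
  | _, 0 => 1
  | [], _ + 1 => 0
  | y :: ys, d + 1 => Hc ys (d + 1) + y * Hc (y :: ys) d
  termination_by l d => (l.length, d)

@[simp] lemma Hc_zero (l : List ℝ) : Hc l 0 = 1 := by cases l <;> rw [Hc]

@[simp] lemma Hc_nil_succ (d : ℕ) : Hc [] (d + 1) = 0 := by rw [Hc]

lemma Hc_cons (y : ℝ) (ys : List ℝ) (d : ℕ) :
    Hc (y :: ys) (d + 1) = Hc ys (d + 1) + y * Hc (y :: ys) d := by rw [Hc]

@[simp] lemma Hc_single (z : ℝ) (d : ℕ) : Hc [z] d = z ^ d := by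
  induction d with
  | zero => simp
  | succ d ih => rw [Hc_cons, ih, Hc_nil_succ, pow_succ]; ring

lemma Hc_diff (u v : ℝ) (T : List ℝ) (d : ℕ) :
    Hc (u :: T) (d + 1) - Hc (v :: T) (d + 1) = (u - v) * Hc (u :: v :: T) d := by
  induction d with
  | zero => simp [Hc_cons]
  | succ d ih =>
      rw [Hc_cons u T, Hc_cons v T, Hc_cons u (v :: T)]
      calc Hc T (d + 1 + 1) + u * Hc (u :: T) (d + 1) - (Hc T (d + 1 + 1) + v * Hc (v :: T) (d + 1))
          = u * (Hc (u :: T) (d+1) - Hc (v :: T) (d+1)) + (u - v) * Hc (v :: T) (d+1) := by ring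
        _ = (u - v) * (Hc (v :: T) (d + 1) + u * Hc (u :: v :: T) d) := by rw [ih]; ring

lemma Hc_swap (a b : ℝ) (T : List ℝ) (d : ℕ) : Hc (a :: b :: T) d = Hc (b :: a :: T) d := by
  induction d with
  | zero => simp
  | succ d ih =>
      rw [Hc_cons a (b :: T), Hc_cons b (a :: T)]
      cases d with
      | zero => rw [Hc_cons a T, Hc_cons b T]; simp; ring
      | succ e =>
          rw [Hc_cons a T, Hc_cons b T]
          have h2 : Hc (a :: T) (e + 1) - Hc (b :: T) (e + 1) = (a - b) * Hc (a :: b :: T) e :=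
            Hc_diff a b T e
          have hcons : Hc (a :: b :: T) (e + 1)
              = Hc (b :: T) (e + 1) + a * Hc (a :: b :: T) e := Hc_cons a (b :: T) e
          linear_combination (-a) * h2 + (a - b) * hcons + b * ih

lemma Hc_perm {l l' : List ℝ} (h : l.Perm l') (d : ℕ) : Hc l d = Hc l' d := by
  induction h generalizing d with
  | nil => rfl
  | cons x h ih =>
      induction d with
      | zero => simp
      | succ d ihd => rw [Hc_cons, Hc_cons, ih, ihd]
  | swap a b l => exact Hc_swap b a l d
  | trans h1 h2 ih1 ih2 => rw [ih1, ih2]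

lemma Hc_bound {δ : ℝ} (hδ : 0 ≤ δ) :
    ∀ l : List ℝ, (∀ y ∈ l, |y| ≤ δ) → ∀ d : ℕ,
      |Hc l d| ≤ (Nat.choose (d + l.length - 1) d : ℝ) * δ ^ d := by
  intro l
  induction l with
  | nil =>
      intro _ d
      cases d with
      | zero => simp
      | succ d =>
          simp only [Hc_nil_succ, abs_zero]
          positivity
  | cons y ys ih =>
      intro hmem d
      induction d with
      | zero => simp
      | succ d ihd =>
          rw [Hc_cons]
          have h1 := ih (fun z hz => hmem z (List.mem_cons_of_mem y hz)) (d + 1)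
          have h2 := ihd
          have hy : |y| ≤ δ := hmem y List.mem_cons_self
          have habs : |Hc ys (d + 1) + y * Hc (y :: ys) d|
              ≤ |Hc ys (d+1)| + |y| * |Hc (y :: ys) d| := by
            calc |Hc ys (d + 1) + y * Hc (y :: ys) d|
                ≤ |Hc ys (d+1)| + |y * Hc (y :: ys) d| := abs_add_le _ _
              _ = |Hc ys (d+1)| + |y| * |Hc (y :: ys) d| := by rw [abs_mul]
          have hHnn : (0:ℝ) ≤ |Hc (y :: ys) d| := abs_nonneg _
          have step2 : |y| * |Hc (y :: ys) d| ≤ δ * ((Nat.choose (d + (y::ys).length - 1) d : ℝ) * δ ^ d) := by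
            apply mul_le_mul hy h2 hHnn hδ
          have key : |Hc ys (d+1)| + |y| * |Hc (y :: ys) d|
              ≤ (Nat.choose (d + 1 + ys.length - 1) (d+1) : ℝ) * δ ^ (d+1)
                + δ * ((Nat.choose (d + (y::ys).length - 1) d : ℝ) * δ ^ d) :=
            add_le_add h1 step2
          refine habs.trans (key.trans (le_of_eq ?_))
      -- arithmetic: choose (d+ys.length) (d+1) + choose (d+ys.length) d = choose (d+1+ys.length) (d+1)
          have e1 : d + 1 + ys.length - 1 = d + ys.length := by omega
          have e2 : d + (y::ys).length - 1 = d + ys.length := by simp [List.length_cons]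
          have e3 : d + 1 + (y::ys).length - 1 = d + ys.length + 1 := by simp [List.length_cons]; omega
          rw [e1, e2, e3]
          have pascal : Nat.choose (d + ys.length + 1) (d + 1)
              = Nat.choose (d + ys.length) d + Nat.choose (d + ys.length) (d + 1) :=
            Nat.choose_succ_succ' (d + ys.length) d ▸ rfl
          rw [pascal]
          push_cast
          ring

noncomputable def wfun (s : Finset ℝ) (z : ℝ) : ℝ := (∏ y ∈ s.erase z, (z - y))⁻¹

noncomputable def ddiff (s : Finset ℝ) (j : ℕ) : ℝ := ∑ z ∈ s, z ^ j * wfun s z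

noncomputable def Gfun (s : Finset ℝ) (j : ℕ) : ℝ :=
  if s.card ≤ j + 1 then Hc s.toList (j + 1 - s.card) else 0

lemma toList_perm_cons {s : Finset ℝ} {a : ℝ} (h : a ∈ s) :
    s.toList.Perm (a :: (s.erase a).toList) := by
  rw [← Multiset.coe_eq_coe]
  show (s.toList : Multiset ℝ) = (a ::ₘ ((s.erase a).toList : Multiset ℝ))
  rw [Finset.coe_toList, Finset.coe_toList, Finset.erase_val]
  exact (Multiset.cons_erase (Finset.mem_def.mp h)).symm

lemma wfun_erase {s : Finset ℝ} {z u : ℝ} (hz : z ∈ s) (hu : u ∈ s) (hzu : z ≠ u) :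
    wfun (s.erase u) z = (z - u) * wfun s z := by
  have hzu' : z - u ≠ 0 := sub_ne_zero_of_ne hzu
  have hus : u ∈ s.erase z := Finset.mem_erase.mpr ⟨(Ne.symm hzu), hu⟩
  have hprod : ∏ y ∈ s.erase z, (z - y) = (z - u) * ∏ y ∈ (s.erase z).erase u, (z - y) :=
    (Finset.mul_prod_erase _ _ hus).symm
  unfold wfun
  rw [Finset.erase_right_comm, hprod, mul_inv]
  rw [← mul_assoc, mul_inv_cancel₀ hzu', one_mul]

lemma ddiff_rec {s : Finset ℝ} {u v : ℝ} (hu : u ∈ s) (hv : v ∈ s) (huv : u ≠ v) (j : ℕ) :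
    (v - u) * ddiff s j = ddiff (s.erase u) j - ddiff (s.erase v) j := by
  classical
  have h1 : ∀ w : ℝ, ddiff (s.erase w) j
      = ∑ z ∈ s, (if z = w then (0:ℝ) else z ^ j * wfun (s.erase w) z) := by
    intro w
    rw [ddiff, ← Finset.sum_erase s
      (f := fun z => if z = w then (0:ℝ) else z ^ j * wfun (s.erase w) z) (if_pos rfl)]
    exact Finset.sum_congr rfl fun z hz => by rw [if_neg (Finset.ne_of_mem_erase hz)]
  rw [ddiff, Finset.mul_sum, h1 u, h1 v, ← Finset.sum_sub_distrib]
  apply Finset.sum_congr rfl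
  intro z hz
  by_cases hzu : z = u
  · subst hzu
    rw [if_pos rfl, if_neg huv, wfun_erase hu hv huv]
    ring
  · by_cases hzv : z = v
    · subst hzv
      rw [if_neg (Ne.symm huv), if_pos rfl, wfun_erase hv hu (Ne.symm huv)]
      ring
    · rw [if_neg hzu, if_neg hzv, wfun_erase hz hu hzu, wfun_erase hz hv hzv]
      ring

lemma ddiff_singleton (z : ℝ) (j : ℕ) : ddiff {z} j = z ^ j := by
  simp [ddiff, wfun]

lemma ddiff_eq_Gfun : ∀ n : ℕ, ∀ s : Finset ℝ, s.card = n + 1 → ∀ j : ℕ, ddiff s j = Gfun s j := by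
  intro n
  induction n with
  | zero =>
      intro s hs j
      obtain ⟨z, rfl⟩ := Finset.card_eq_one.mp hs
      rw [ddiff_singleton, Gfun]
      simp
  | succ n ih =>
      intro s hs j
      have h2 : 1 < s.card := by omega
      obtain ⟨u, hu, v, hv, huv⟩ := Finset.one_lt_card.mp h2
      have hvu : v - u ≠ 0 := sub_ne_zero_of_ne (Ne.symm huv)
      have hcu : (s.erase u).card = n + 1 := by rw [Finset.card_erase_of_mem hu]; omega
      have hcv : (s.erase v).card = n + 1 := by rw [Finset.card_erase_of_mem hv]; omega
      have key : (v - u) * ddiff s j = Gfun (s.erase u) j - Gfun (s.erase v) j := by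
        rw [ddiff_rec hu hv huv, ih _ hcu, ih _ hcv]
      have goalG : Gfun (s.erase u) j - Gfun (s.erase v) j = (v - u) * Gfun s j := by
        by_cases hj : s.card ≤ j + 1
        · -- j + 1 ≥ n + 2, so j + 1 - (n+1) = (j - n - 1) + 1
          have hj' : n + 2 ≤ j + 1 := by omega
          obtain ⟨d, hd⟩ : ∃ d, j + 1 - (n + 1) = d + 1 := ⟨j - n - 1, by omega⟩
          have hvs : v ∈ s.erase u := Finset.mem_erase.mpr ⟨Ne.symm huv, hv⟩
          have hus : u ∈ s.erase v := Finset.mem_erase.mpr ⟨huv, hu⟩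
          have hT : (s.erase v).erase u = (s.erase u).erase v := Finset.erase_right_comm
          have p1 : (s.erase u).toList.Perm (v :: ((s.erase u).erase v).toList) :=
            toList_perm_cons hvs
          have p2 : (s.erase v).toList.Perm (u :: ((s.erase u).erase v).toList) := by
            rw [← hT]; exact toList_perm_cons hus
          have p3 : s.toList.Perm (v :: u :: ((s.erase u).erase v).toList) := by
            refine (toList_perm_cons hv).trans (List.Perm.cons v ?_)
            rw [← Finset.erase_right_comm (a := v)]
            exact toList_perm_cons hus
          rw [Gfun, Gfun, Gfun, if_pos (by omega), if_pos (by omega), if_pos hj,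
            hcu, hcv, hs, hd]
          have hd2 : j + 1 - (n + 1 + 1) = d := by omega
          rw [hd2, Hc_perm p1, Hc_perm p2, Hc_perm p3, Hc_diff]
        · rw [Gfun, Gfun, Gfun, if_neg hj, hcu, hcv]
          split_ifs with h3
          · simp [show j + 1 - (n + 1) = 0 by omega]
          · simp
      rw [goalG] at key
      exact mul_left_cancel₀ hvu key

lemma choose_le_pow_aux (m : ℕ) (hm : 1 ≤ m) : ∀ e : ℕ, Nat.choose (m - 1 + e) (m - 1) ≤ m ^ e := by
  intro e
  induction e with
  | zero => simp
  | succ e ih =>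
      have key : (e + 1) * Nat.choose (m - 1 + e + 1) (m - 1)
          = (m - 1 + e + 1) * Nat.choose (m - 1 + e) (m - 1) := by
        have h1 := Nat.add_one_mul_choose_eq (m - 1 + e) e
        -- succ (m-1+e) * choose (m-1+e) e = choose (m-1+e+1) (e+1) * succ e
        have h2 : Nat.choose (m - 1 + e) e = Nat.choose (m - 1 + e) (m - 1) := by
          rw [← Nat.choose_symm (by omega)]
          congr 1
          omega
        have h3 : Nat.choose (m - 1 + e + 1) (e + 1) = Nat.choose (m - 1 + e + 1) (m - 1) := by
          rw [← Nat.choose_symm (by omega)]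
          congr 1
          omega
        rw [h2, h3] at h1
        simpa [Nat.succ_eq_add_one, Nat.mul_comm] using h1.symm
      have h4 : (m - 1 + e + 1) * Nat.choose (m - 1 + e) (m - 1) ≤ (e + 1) * m ^ (e + 1) := by
        calc (m - 1 + e + 1) * Nat.choose (m - 1 + e) (m - 1)
            ≤ ((e + 1) * m) * Nat.choose (m - 1 + e) (m - 1) := by
              apply Nat.mul_le_mul_right
              have h5 : e * 1 ≤ e * m := Nat.mul_le_mul_left e hm
              have h6 : (e + 1) * m = e * m + m := by ring
              omega
          _ = (e + 1) * (m * Nat.choose (m - 1 + e) (m - 1)) := by ring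
          _ ≤ (e + 1) * (m * m ^ e) := by
              apply Nat.mul_le_mul_left
              exact Nat.mul_le_mul_left _ ih
          _ = (e + 1) * m ^ (e + 1) := by ring
      have := key.trans_le h4
      exact Nat.le_of_mul_le_mul_left this (by omega)

lemma card_filter_ge (k m : ℕ) (h : m < k) :
    (Finset.univ.filter fun j : Fin k => m ≤ (j:ℕ)).card = k - m := by
  have hinj : Function.Injective (fun i : Fin (k - m) => (⟨m + i, by omega⟩ : Fin k)) := by
    intro i i' hii
    simp only [Fin.mk.injEq, Nat.add_right_cancel_iff] at hii
    exact Fin.ext (by omega)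
  have : (Finset.univ.filter fun j : Fin k => m ≤ (j:ℕ))
      = Finset.map ⟨_, hinj⟩ Finset.univ := by
    ext j
    simp only [Finset.mem_filter, Finset.mem_univ, true_and, Finset.mem_map,
      Function.Embedding.coeFn_mk]
    constructor
    · intro hj
      exact ⟨⟨(j:ℕ) - m, by omega⟩, by simp [Fin.ext_iff]; omega⟩
    · rintro ⟨i, rfl⟩; simp
  rw [this, Finset.card_map, Finset.card_univ, Fintype.card_fin]

open Matrix

theorem interpolation_middle_coeff_bound {m k : ℕ} (hm : 1 ≤ m) (hk : m < k)
    (a : Fin k → ℝ) (x : Fin m → ℝ) (hdist : Function.Injective x)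
    (δ : ℝ) (hδ0 : 0 < δ) (hδ1 : δ < 1 / m) (hxd : ∀ i, |x i| ≤ δ)
    (ahat : Fin m → ℝ)
    (hhat : ahat = (Matrix.of fun i j : Fin m => x i ^ (j : ℕ))⁻¹ *ᵥ
      (fun i => ∑ j : Fin k, a j * x i ^ (j : ℕ))) :
    |ahat ⟨m - 1, by omega⟩ - a ⟨m - 1, by omega⟩|
      ≤ (Finset.univ.sup' ⟨⟨0, by omega⟩, Finset.mem_univ _⟩ fun j : Fin k => |a j|)
          * ((k : ℝ) - m) * m * δ := by
  classical
  set s : Finset ℝ := Finset.univ.image x with hs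
  have hinj : ∀ x₁ ∈ Finset.univ, ∀ x₂ ∈ Finset.univ, x x₁ = x x₂ → x₁ = x₂ :=
    fun i _ i' _ h => hdist h
  have hcard : s.card = m := by
    rw [hs, Finset.card_image_of_injective _ hdist, Finset.card_univ, Fintype.card_fin]
  have hG : ∀ j : ℕ, ∑ i : Fin m, (x i) ^ j * wfun s (x i) = Gfun s j := by
    intro j
    have h1 : ddiff s j = ∑ i : Fin m, (x i) ^ j * wfun s (x i) :=
      Finset.sum_image hinj
    rw [← h1]
    exact ddiff_eq_Gfun (m - 1) s (by omega) j
  have hVdet : IsUnit (Matrix.vandermonde x).det :=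
    isUnit_iff_ne_zero.mpr (Matrix.det_vandermonde_ne_zero_iff.mpr hdist)
  have hmulV : ∀ i, ∑ t : Fin m, x i ^ (t : ℕ) * ahat t = ∑ j : Fin k, a j * x i ^ (j : ℕ) := by
    intro i
    have hv : Matrix.vandermonde x *ᵥ ahat = (fun i => ∑ j : Fin k, a j * x i ^ (j : ℕ)) := by
      rw [hhat]
      show Matrix.vandermonde x *ᵥ ((Matrix.vandermonde x)⁻¹ *ᵥ _) = _
      rw [Matrix.mulVec_mulVec, Matrix.mul_nonsing_inv _ hVdet, Matrix.one_mulVec]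
    have := congrFun hv i
    simpa [Matrix.mulVec, dotProduct, Matrix.vandermonde] using this
  have hGt : ∀ t : Fin m, Gfun s (t:ℕ) = if (t:ℕ) = m - 1 then 1 else 0 := by
    intro t
    have ht := t.isLt
    by_cases h : (t:ℕ) = m - 1
    · rw [Gfun, hcard, if_pos (by omega), if_pos h, show (t:ℕ) + 1 - m = 0 by omega, Hc_zero]
    · rw [Gfun, hcard, if_neg (by omega), if_neg h]
  have hlast : ahat ⟨m - 1, by omega⟩ = ∑ j : Fin k, a j * Gfun s (j:ℕ) := by
    have e1 : ∑ t : Fin m, ahat t * Gfun s (t:ℕ) = ahat ⟨m - 1, by omega⟩ := by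
      have : ∀ t : Fin m, ahat t * Gfun s (t:ℕ)
          = if t = (⟨m - 1, by omega⟩ : Fin m) then ahat t else 0 := by
        intro t
        rw [hGt t]
        by_cases h : (t:ℕ) = m - 1
        · rw [if_pos h, if_pos (Fin.ext h), mul_one]
        · rw [if_neg h, if_neg (fun hh => h (by rw [hh])), mul_zero]
      rw [Finset.sum_congr rfl fun t _ => this t, Finset.sum_ite_eq' Finset.univ,
        if_pos (Finset.mem_univ _)]
    calc ahat ⟨m - 1, by omega⟩
        = ∑ t : Fin m, ahat t * Gfun s (t:ℕ) := e1.symm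
      _ = ∑ t : Fin m, ahat t * ∑ i : Fin m, (x i) ^ (t:ℕ) * wfun s (x i) := by
          exact Finset.sum_congr rfl fun t _ => by rw [hG]
      _ = ∑ i : Fin m, wfun s (x i) * ∑ t : Fin m, x i ^ (t:ℕ) * ahat t := by
          simp only [Finset.mul_sum]
          rw [Finset.sum_comm]
          exact Finset.sum_congr rfl fun i _ => Finset.sum_congr rfl fun t _ => by ring
      _ = ∑ i : Fin m, wfun s (x i) * ∑ j : Fin k, a j * x i ^ (j:ℕ) := by
          exact Finset.sum_congr rfl fun i _ => by rw [hmulV]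
      _ = ∑ j : Fin k, a j * ∑ i : Fin m, (x i) ^ (j:ℕ) * wfun s (x i) := by
          simp only [Finset.mul_sum]
          rw [Finset.sum_comm]
          exact Finset.sum_congr rfl fun j _ => Finset.sum_congr rfl fun i _ => by ring
      _ = ∑ j : Fin k, a j * Gfun s (j:ℕ) := by
          exact Finset.sum_congr rfl fun j _ => by rw [hG]
  set F : Finset (Fin k) := Finset.filter (fun j : Fin k => m ≤ (j:ℕ)) Finset.univ with hF
  have hsplit : ∑ j : Fin k, a j * Gfun s (j:ℕ)
      = a ⟨m - 1, by omega⟩ + ∑ j ∈ F, a j * Hc s.toList ((j:ℕ) + 1 - m) := by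
    rw [← Finset.sum_filter_add_sum_filter_not Finset.univ (fun j : Fin k => m ≤ (j:ℕ))
      (fun j => a j * Gfun s (j:ℕ))]
    rw [add_comm]
    congr 1
    · have hpt : ∀ j ∈ Finset.univ.filter (fun j : Fin k => ¬ m ≤ (j:ℕ)),
          a j * Gfun s (j:ℕ) = if j = (⟨m - 1, by omega⟩ : Fin k) then a j else 0 := by
        intro j hj
        have hjm : ¬ m ≤ (j:ℕ) := (Finset.mem_filter.mp hj).2
        rw [Gfun]
        simp only [hcard]
        by_cases hmj : (j:ℕ) = m - 1
        · rw [if_pos (by omega), show (j:ℕ) + 1 - m = 0 by omega, Hc_zero, mul_one,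
            if_pos (Fin.ext hmj)]
        · rw [if_neg (by omega), mul_zero,
            if_neg (fun hh => hmj (congrArg Fin.val hh))]
      rw [Finset.sum_congr rfl hpt, Finset.sum_ite_eq', if_pos]
      simp only [Finset.mem_filter, Finset.mem_univ, true_and]
      omega
    · apply Finset.sum_congr rfl
      intro j hj
      have hjm : m ≤ (j:ℕ) := by
        have := (Finset.mem_filter.mp (hF ▸ hj)).2
        exact this
      rw [Gfun]
      simp only [hcard]
      rw [if_pos (by omega)]
  have hdiff : ahat ⟨m - 1, by omega⟩ - a ⟨m - 1, by omega⟩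
      = ∑ j ∈ F, a j * Hc s.toList ((j:ℕ) + 1 - m) := by
    rw [hlast, hsplit]; ring
  rw [hdiff]
  set A := Finset.univ.sup' ⟨⟨0, by omega⟩, Finset.mem_univ _⟩ (fun j : Fin k => |a j|) with hA
  have hA0 : (0:ℝ) ≤ A := by
    rw [hA]
    exact le_trans (abs_nonneg (a ⟨0, by omega⟩))
      (Finset.le_sup' (fun j : Fin k => |a j|) (Finset.mem_univ (⟨0, by omega⟩ : Fin k)))
  have hm0 : (0:ℝ) < (m:ℝ) := by
    have : (0:ℕ) < m := by omega
    exact_mod_cast this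
  have hmδ1 : (m:ℝ) * δ ≤ 1 := by
    have := (lt_div_iff₀ hm0).mp hδ1
    nlinarith
  have hterm : ∀ j ∈ F, |a j * Hc s.toList ((j:ℕ) + 1 - m)| ≤ A * ((m:ℝ) * δ) := by
    intro j hj
    have hjm : m ≤ (j:ℕ) := by
      have := (Finset.mem_filter.mp (hF ▸ hj)).2
      exact this
    have hlen : s.toList.length = m := by rw [Finset.length_toList, hcard]
    have hmem : ∀ y ∈ s.toList, |y| ≤ δ := by
      intro y hy
      obtain ⟨i, _, rfl⟩ := Finset.mem_image.mp (Finset.mem_toList.mp hy)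
      exact hxd i
    set d := (j:ℕ) + 1 - m with hd
    have hd1 : 1 ≤ d := by omega
    have hHb := Hc_bound hδ0.le s.toList hmem d
    rw [hlen] at hHb
    have hch : (Nat.choose (d + m - 1) d : ℝ) ≤ (m:ℝ) ^ d := by
      have h1 : d + m - 1 = m - 1 + d := by omega
      have h2 : Nat.choose (m - 1 + d) d = Nat.choose (m - 1 + d) (m - 1) := by
        have hsym := Nat.choose_symm (n := m - 1 + d) (k := m - 1) (Nat.le_add_right _ _)
        rwa [Nat.add_sub_cancel_left] at hsym
      have h3 := choose_le_pow_aux m hm d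
      rw [h1, h2]
      exact_mod_cast h3
    have hHb2 : |Hc s.toList d| ≤ ((m:ℝ) * δ) ^ d := by
      calc |Hc s.toList d| ≤ (Nat.choose (d + m - 1) d : ℝ) * δ ^ d := hHb
        _ ≤ (m:ℝ) ^ d * δ ^ d := by
            apply mul_le_mul_of_nonneg_right hch (by positivity)
        _ = ((m:ℝ) * δ) ^ d := (mul_pow _ _ _).symm
    have hpow : ((m:ℝ) * δ) ^ d ≤ (m:ℝ) * δ := by
      have := pow_le_pow_of_le_one (by positivity) hmδ1 hd1
      simpa using this
    have hja : |a j| ≤ A := by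
      rw [hA]
      exact Finset.le_sup' (fun j : Fin k => |a j|) (Finset.mem_univ j)
    rw [abs_mul]
    exact mul_le_mul hja (hHb2.trans hpow) (abs_nonneg _) hA0
  calc |∑ j ∈ F, a j * Hc s.toList ((j:ℕ) + 1 - m)|
      ≤ ∑ j ∈ F, |a j * Hc s.toList ((j:ℕ) + 1 - m)| := Finset.abs_sum_le_sum_abs _ _
    _ ≤ F.card • (A * ((m:ℝ) * δ)) := Finset.sum_le_card_nsmul F _ _ hterm
    _ = ((k - m : ℕ) : ℝ) * (A * ((m:ℝ) * δ)) := by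
        rw [hF, card_filter_ge k m hk, nsmul_eq_mul]
    _ = A * ((k : ℝ) - m) * m * δ := by
        rw [Nat.cast_sub hk.le]
        ring
end

section
/- Let m ≥ 1 and let x_1,…,x_m be distinct real numbers. Then for every integer l ≥ 0, Σ_{i=1}^{m} x_i^{m−1+l} / ∏_{j≠i}(x_i − x_j) = h_l(x_1,…,x_m), where h_l is the complete homogeneous symmetric polynomial of degree l. -/
open Finset Polynomial

lemma leadingCoeff_lagrange_basis {n : ℕ} (y : Fin n → ℝ) (hy : Function.Injective y)
    (i : Fin n) :
    (Lagrange.basis Finset.univ y i).coeff (n - 1) = ∏ j ∈ Finset.univ.erase i, (y i - y j)⁻¹ := by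
  have hvs : Set.InjOn y (Finset.univ : Finset (Fin n)) := hy.injOn
  have hdeg := Lagrange.natDegree_basis hvs (Finset.mem_univ i)
  rw [Finset.card_univ, Fintype.card_fin] at hdeg
  rw [← hdeg, Polynomial.coeff_natDegree]
  unfold Lagrange.basis
  rw [Polynomial.leadingCoeff_prod]
  refine Finset.prod_congr rfl fun j hj => ?_
  have hne : y i ≠ y j := fun h => (Finset.mem_erase.mp hj).1 (hy h).symm
  unfold Lagrange.basisDivisor
  rw [Polynomial.leadingCoeff_mul, Polynomial.leadingCoeff_C,
    (Polynomial.monic_X_sub_C (y j)).leadingCoeff, mul_one]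

lemma zero_sum {n : ℕ} (hn : 2 ≤ n) (y : Fin n → ℝ) (hy : Function.Injective y) :
    ∑ i : Fin n, y i ^ (n - 2) / ∏ j ∈ Finset.univ.erase i, (y i - y j) = 0 := by
  have hvs : Set.InjOn y (Finset.univ : Finset (Fin n)) := hy.injOn
  have hcard : (Finset.univ : Finset (Fin n)).card = n := by simp
  have key : (Polynomial.X ^ (n - 2) : ℝ[X]) =
      Lagrange.interpolate Finset.univ y (fun i => y i ^ (n - 2)) := by
    apply Lagrange.eq_interpolate_of_eval_eq _ hvs
    · rw [hcard, Polynomial.degree_X_pow]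
      exact_mod_cast Nat.sub_lt (by omega) (by omega)
    · intro i _; simp
  have hcoeff := congrArg (fun p : ℝ[X] => p.coeff (n - 1)) key
  simp only [Lagrange.interpolate_apply, Polynomial.finset_sum_coeff,
    Polynomial.coeff_C_mul, Polynomial.coeff_X_pow] at hcoeff
  rw [if_neg (by omega)] at hcoeff
  rw [eq_comm] at hcoeff
  rw [← hcoeff]
  refine Finset.sum_congr rfl fun i _ => ?_
  rw [leadingCoeff_lagrange_basis y hy i, div_eq_mul_inv, Finset.prod_inv_distrib]

lemma hsum_rec (m l : ℕ) (x : Fin (m + 1) → ℝ) :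
    ∑ d ∈ Finset.Nat.antidiagonalTuple (m + 1) l, ∏ i, x i ^ d i
      = ∑ p ∈ Finset.HasAntidiagonal.antidiagonal l, x 0 ^ p.1 *
          ∑ d ∈ Finset.Nat.antidiagonalTuple m p.2, ∏ i : Fin m, x i.succ ^ d i := by
  simp_rw [Finset.mul_sum]
  rw [Finset.sum_sigma']
  refine Finset.sum_nbij' (fun d => ⟨(d 0, ∑ i : Fin m, d i.succ), Fin.tail d⟩)
    (fun q => Fin.cons q.1.1 q.2) ?_ ?_ ?_ ?_ ?_
  · intro d hd
    rw [Finset.Nat.mem_antidiagonalTuple, Fin.sum_univ_succ] at hd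
    simp [Finset.mem_sigma, Finset.Nat.mem_antidiagonalTuple, Finset.mem_antidiagonal, hd, Fin.tail]
  · intro q hq
    rw [Finset.mem_sigma, Finset.HasAntidiagonal.mem_antidiagonal, Finset.Nat.mem_antidiagonalTuple] at hq
    rw [Finset.Nat.mem_antidiagonalTuple, Fin.sum_univ_succ]
    simp [Fin.cons_succ, hq.2, hq.1]
  · intro d hd
    simp [Fin.cons_self_tail]
  · intro q hq
    rw [Finset.mem_sigma, Finset.HasAntidiagonal.mem_antidiagonal, Finset.Nat.mem_antidiagonalTuple] at hq
    ext : 1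
    · simp [Fin.cons_succ, hq.2]
    · simp [Fin.tail_cons]
  · intro d hd
    rw [Fin.prod_univ_succ]
    simp [Fin.tail]

lemma erase_succ_eq {m : ℕ} (i : Fin (m + 1)) :
    (Finset.univ : Finset (Fin (m + 2))).erase i.succ
      = insert (0 : Fin (m + 2)) ((Finset.univ.erase i).image Fin.succ) := by
  ext j
  induction j using Fin.cases with
  | zero => simp [(Fin.succ_ne_zero i).symm]
  | succ k =>
    simp [Fin.succ_inj, (Fin.succ_ne_zero _).symm, Fin.succ_ne_zero,
      eq_comm, Fin.succ_injective]

lemma prod_erase_succ {m : ℕ} (x : Fin (m + 2) → ℝ) (i : Fin (m + 1)) :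
    ∏ j ∈ Finset.univ.erase i.succ, (x i.succ - x j)
      = (x i.succ - x 0) * ∏ j ∈ Finset.univ.erase i, (x i.succ - x j.succ) := by
  rw [erase_succ_eq, Finset.prod_insert, Finset.prod_image]
  · intro a _ b _ h; exact Fin.succ_injective _ h
  · simp only [Finset.mem_image, not_exists]
    exact fun a h => Fin.succ_ne_zero a h.2
lemma main_aux (m : ℕ) : ∀ (x : Fin (m + 1) → ℝ), Function.Injective x → ∀ l : ℕ,
    ∑ i : Fin (m + 1), x i ^ (m + l) / ∏ j ∈ Finset.univ.erase i, (x i - x j)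
      = ∑ d ∈ Finset.Nat.antidiagonalTuple (m + 1) l, ∏ i, x i ^ d i := by
  induction m with
  | zero =>
    intro x hx l
    rw [show Finset.Nat.antidiagonalTuple 1 l = {![l]} from Finset.Nat.antidiagonalTuple_one l]
    simp
  | succ m ih =>
    intro x hx l
    have ht : Function.Injective (fun i : Fin (m + 1) => x i.succ) :=
      fun a b h => Fin.succ_injective _ (hx h)
    rw [hsum_rec (m + 1) l x]
    have hinner : ∀ p ∈ Finset.HasAntidiagonal.antidiagonal l,
        x 0 ^ p.1 * ∑ d ∈ Finset.Nat.antidiagonalTuple (m + 1) p.2,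
            ∏ i : Fin (m + 1), x i.succ ^ d i
        = x 0 ^ p.1 * ∑ i : Fin (m + 1),
            x i.succ ^ (m + p.2) / ∏ j ∈ Finset.univ.erase i, (x i.succ - x j.succ) := by
      intro p _
      rw [← ih (fun i => x i.succ) ht p.2]
    rw [Finset.sum_congr rfl hinner]
    simp_rw [Finset.mul_sum]
    rw [Finset.sum_comm]
    have hB : ∀ i : Fin (m + 1),
        (∏ j ∈ Finset.univ.erase i, (x i.succ - x j.succ)) ≠ 0 := by
      intro i
      refine Finset.prod_ne_zero_iff.mpr fun j hj => sub_ne_zero.mpr fun h => ?_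
      exact (Finset.mem_erase.mp hj).1 (Fin.succ_injective _ (hx h)).symm
    have key : ∀ i : Fin (m + 1),
        ∑ p ∈ Finset.HasAntidiagonal.antidiagonal l, x 0 ^ p.1 *
            (x i.succ ^ (m + p.2) / ∏ j ∈ Finset.univ.erase i, (x i.succ - x j.succ))
        = x i.succ ^ (m + 1 + l) / (∏ j ∈ Finset.univ.erase i.succ, (x i.succ - x j))
            - x 0 ^ (l + 1) *
              (x i.succ ^ m / ∏ j ∈ Finset.univ.erase i.succ, (x i.succ - x j)) := by
      intro i
      have hne : x i.succ - x 0 ≠ 0 :=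
        sub_ne_zero.mpr fun h => Fin.succ_ne_zero i (hx h)
      have hgeom : ∑ k ∈ Finset.range (l + 1), x 0 ^ k * x i.succ ^ (l - k)
          = (x i.succ ^ (l + 1) - x 0 ^ (l + 1)) / (x i.succ - x 0) := by
        rw [eq_div_iff hne]
        have h := geom_sum₂_mul (x 0) (x i.succ) (l + 1)
        simp only [Nat.add_sub_cancel] at h
        linear_combination -h
      have hsum : ∑ p ∈ Finset.HasAntidiagonal.antidiagonal l, x 0 ^ p.1 * x i.succ ^ (m + p.2)
          = x i.succ ^ m * ((x i.succ ^ (l + 1) - x 0 ^ (l + 1)) / (x i.succ - x 0)) := by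
        rw [Finset.Nat.sum_antidiagonal_eq_sum_range_succ
          (fun a b => x 0 ^ a * x i.succ ^ (m + b)) l, ← hgeom, Finset.mul_sum]
        refine Finset.sum_congr rfl fun k _ => ?_
        rw [pow_add]
        ring
      calc ∑ p ∈ Finset.HasAntidiagonal.antidiagonal l, x 0 ^ p.1 *
            (x i.succ ^ (m + p.2) / ∏ j ∈ Finset.univ.erase i, (x i.succ - x j.succ))
          = (∑ p ∈ Finset.HasAntidiagonal.antidiagonal l, x 0 ^ p.1 * x i.succ ^ (m + p.2)) /
              ∏ j ∈ Finset.univ.erase i, (x i.succ - x j.succ) := by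
            rw [Finset.sum_div]
            exact Finset.sum_congr rfl fun p _ => (mul_div_assoc _ _ _).symm
        _ = (x i.succ ^ m * (x i.succ ^ (l + 1) - x 0 ^ (l + 1))) /
              ((x i.succ - x 0) * ∏ j ∈ Finset.univ.erase i, (x i.succ - x j.succ)) := by
            rw [hsum, mul_div_assoc', div_div]
        _ = (x i.succ ^ (m + 1 + l) - x 0 ^ (l + 1) * x i.succ ^ m) /
              (∏ j ∈ Finset.univ.erase i.succ, (x i.succ - x j)) := by
            rw [prod_erase_succ x i]
            congr 1
            ring
        _ = _ := by rw [sub_div, mul_div_assoc]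
    rw [Finset.sum_congr rfl fun i _ => key i, Finset.sum_sub_distrib, ← Finset.mul_sum]
    have hz : x 0 ^ m / (∏ j ∈ Finset.univ.erase (0 : Fin (m + 2)), (x 0 - x j))
        + ∑ i : Fin (m + 1),
            x i.succ ^ m / ∏ j ∈ Finset.univ.erase i.succ, (x i.succ - x j) = 0 := by
      have h0 := zero_sum (n := m + 2) (by omega) x hx
      rwa [Fin.sum_univ_succ] at h0
    rw [Fin.sum_univ_succ]
    linear_combination (x 0) ^ (l + 1) * hz

theorem sum_ratio_eq_hsymm {m : ℕ} (hm : 1 ≤ m) (x : Fin m → ℝ)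
    (hdist : Function.Injective x) (l : ℕ) :
    ∑ i : Fin m, x i ^ (m - 1 + l) / ∏ j ∈ Finset.univ.erase i, (x i - x j)
      = ∑ d ∈ Finset.Nat.antidiagonalTuple m l, ∏ i : Fin m, x i ^ d i := by
  obtain ⟨m, rfl⟩ : ∃ m', m = m' + 1 := ⟨m - 1, by omega⟩
  simpa using main_aux m x hdist l
end

section
/- Suppose p and q divide n, A ∈ ℝ^{n×n} is partitioned into a p×q grid of blocks A_{i,j} ∈ ℝ^{(n/p)×(n/q)} (i ∈ {1,…,p}, j ∈ {1,…,q}), B ∈ ℝ^{n×n} is partitioned into a q×p grid of blocks B_{k,l} ∈ ℝ^{(n/q)×(n/p)} (k ∈ {1,…,q}, l ∈ {1,…,p}), and ‖A‖_F ≤ η, ‖B‖_F ≤ η. For an integer d ≥ 0, let P_d = Σ A_{i,j} B_{k,l} ∈ ℝ^{(n/p)×(n/p)}, where the sum is over all (i,j,k,l) ∈ {1,…,p}×{1,…,q}×{1,…,q}×{1,…,p} with q(i−1) + (j−1) + (q−k) + pq(l−1) = d. Then every entry of P_d has absolute value at most η², i.e., |P_d[v,w]| ≤ η² for all v, w. 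-/
open Matrix

/-- Block `A_{i,j} ∈ ℝ^{(n/p) × (n/q)}` of `A ∈ ℝ^{n × n}` (rows indexed `Fin p × Fin sp`,
columns `Fin q × Fin sq`, where `sp = n/p`, `sq = n/q`). Indices `i, j` are 0-indexed. -/
def blkA {p q sp sq : ℕ} (A : Matrix (Fin p × Fin sp) (Fin q × Fin sq) ℝ)
    (i : Fin p) (j : Fin q) : Matrix (Fin sp) (Fin sq) ℝ :=
  Matrix.of fun v c => A (i, v) (j, c)

/-- Block `B_{k,l} ∈ ℝ^{(n/q) × (n/p)}` of `B ∈ ℝ^{n × n}`. Indices `k, l` are 0-indexed. -/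
def blkB {p q sp sq : ℕ} (B : Matrix (Fin q × Fin sq) (Fin p × Fin sp) ℝ)
    (k : Fin q) (l : Fin p) : Matrix (Fin sq) (Fin sp) ℝ :=
  Matrix.of fun c w => B (k, c) (l, w)

/-- The coefficient of `y^d` in the PolyDot product polynomial `p_A(y) p_B(y)`:
`P_d = Σ A_{i,j} B_{k,l}` over all (1-indexed) `(i,j,k,l)` with
`q(i−1) + (j−1) + (q−k) + pq(l−1) = d`; in the 0-indexed variables below this reads
`q·i + j + (q−1−k) + pq·l = d`. -/
noncomputable def polyDotCoeff {p q sp sq : ℕ}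
    (A : Matrix (Fin p × Fin sp) (Fin q × Fin sq) ℝ)
    (B : Matrix (Fin q × Fin sq) (Fin p × Fin sp) ℝ) (d : ℕ) :
    Matrix (Fin sp) (Fin sp) ℝ :=
  ∑ i : Fin p, ∑ j : Fin q, ∑ k : Fin q, ∑ l : Fin p,
    if q * (i : ℕ) + (j : ℕ) + (q - 1 - (k : ℕ)) + p * q * (l : ℕ) = d then
      blkA A i j * blkB B k l
    else 0
private lemma helper1 {m a a' l l' : ℕ} (ha : a < m) (ha' : a' < m)
    (h : a + m * l = a' + m * l') : a = a' ∧ l = l' := by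
  have hm : 0 < m := Nat.lt_of_le_of_lt (Nat.zero_le a) ha
  have hl : l = l' := by
    have h2 := congrArg (· / m) h
    simpa [Nat.add_mul_div_left _ _ hm, Nat.div_eq_of_lt ha, Nat.div_eq_of_lt ha'] using h2
  subst hl
  exact ⟨Nat.add_right_cancel h, rfl⟩

set_option maxHeartbeats 1000000 in
theorem polydot_coeff_entry_bound {p q sp sq : ℕ} (hp : 1 ≤ p) (hq : 1 ≤ q) (η : ℝ)
    (A : Matrix (Fin p × Fin sp) (Fin q × Fin sq) ℝ)
    (B : Matrix (Fin q × Fin sq) (Fin p × Fin sp) ℝ)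
    (hA : frobNorm A ≤ η) (hB : frobNorm B ≤ η) :
    ∀ (d : ℕ) (v w : Fin sp), |polyDotCoeff A B d v w| ≤ η ^ 2 := by
  intro d v w
  classical
  have hη : 0 ≤ η := le_trans (Real.sqrt_nonneg _) hA
  set S : Finset (Fin p × Fin q × Fin q × Fin p) := Finset.univ.filter (fun t =>
    q * (t.1 : ℕ) + (t.2.1 : ℕ) + (q - 1 - (t.2.2.1 : ℕ)) + p * q * (t.2.2.2 : ℕ) = d)
    with hSdef
  set T : Finset ((Fin p × Fin q × Fin q × Fin p) × Fin sq) :=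
    S ×ˢ (Finset.univ : Finset (Fin sq)) with hTdef
  have hmemS : ∀ t ∈ S,
      q * (t.1 : ℕ) + (t.2.1 : ℕ) + (q - 1 - (t.2.2.1 : ℕ)) + p * q * (t.2.2.2 : ℕ) = d := by
    intro t ht
    simpa [hSdef] using ht
  have hrw : polyDotCoeff A B d v w
      = ∑ x ∈ T, A (x.1.1, v) (x.1.2.1, x.2) * B (x.1.2.2.1, x.2) (x.1.2.2.2, w) := by
    rw [hTdef, Finset.sum_product, hSdef, Finset.sum_filter]
    simp only [polyDotCoeff, Matrix.sum_apply]
    rw [Fintype.sum_prod_type]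
    refine Finset.sum_congr rfl fun i _ => ?_
    rw [Fintype.sum_prod_type]
    refine Finset.sum_congr rfl fun j _ => ?_
    rw [Fintype.sum_prod_type]
    refine Finset.sum_congr rfl fun k _ => ?_
    refine Finset.sum_congr rfl fun l _ => ?_
    by_cases h : q * (i : ℕ) + (j : ℕ) + (q - 1 - (k : ℕ)) + p * q * (l : ℕ) = d
    · simp [h, Matrix.mul_apply, blkA, blkB]
    · simp [h]
  rw [hrw]
  have h1 : |∑ x ∈ T, A (x.1.1, v) (x.1.2.1, x.2) * B (x.1.2.2.1, x.2) (x.1.2.2.2, w)|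
      ≤ ∑ x ∈ T, |A (x.1.1, v) (x.1.2.1, x.2)| * |B (x.1.2.2.1, x.2) (x.1.2.2.2, w)| := by
    refine (Finset.abs_sum_le_sum_abs _ _).trans (le_of_eq ?_)
    exact Finset.sum_congr rfl fun x _ => abs_mul _ _
  -- Cauchy–Schwarz
  have hCS := Finset.sum_mul_sq_le_sq_mul_sq T
    (fun x => |A (x.1.1, v) (x.1.2.1, x.2)|) (fun x => |B (x.1.2.2.1, x.2) (x.1.2.2.2, w)|)
  -- A-side bound
  have hAsum : ∑ x ∈ T, |A (x.1.1, v) (x.1.2.1, x.2)| ^ 2 ≤ ∑ r, ∑ s, A r s ^ 2 := by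
    have hinj : Set.InjOn
        (fun x : (Fin p × Fin q × Fin q × Fin p) × Fin sq =>
          (((x.1.1, v) : Fin p × Fin sp), ((x.1.2.1, x.2) : Fin q × Fin sq))) T := by
      intro x hx y hy hxy
      have hx1 : x.1 ∈ S := (Finset.mem_product.mp hx).1
      have hy1 : y.1 ∈ S := (Finset.mem_product.mp hy).1
      have hxc := hmemS _ hx1
      have hyc := hmemS _ hy1
      obtain ⟨h1, h2, h3⟩ : x.1.1 = y.1.1 ∧ x.1.2.1 = y.1.2.1 ∧ x.2 = y.2 := by
        have := congrArg Prod.fst hxy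
        have h2 := congrArg Prod.snd hxy
        exact ⟨congrArg Prod.fst this ▸ rfl, by
          simpa using congrArg Prod.fst h2, by simpa using congrArg Prod.snd h2⟩
      -- deduce k, l equal
      rw [h1, h2] at hxc
      have hcancel : (q - 1 - (x.1.2.2.1 : ℕ)) + p * q * (x.1.2.2.2 : ℕ)
          = (q - 1 - (y.1.2.2.1 : ℕ)) + p * q * (y.1.2.2.2 : ℕ) := by
        have h' := hxc.trans hyc.symm
        set m := p * q with hm
        set z := q * ((y.1.1 : Fin p) : ℕ) with hz
        set u1 := m * ((x.1.2.2.2 : Fin p) : ℕ) with hu1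
        set u2 := m * ((y.1.2.2.2 : Fin p) : ℕ) with hu2
        omega
      have hklt : (q - 1 - (x.1.2.2.1 : ℕ)) < p * q := by
        have hk := (x.1.2.2.1).isLt
        have : q ≤ p * q := Nat.le_mul_of_pos_left q hp
        omega
      have hklt' : (q - 1 - (y.1.2.2.1 : ℕ)) < p * q := by
        have hk := (y.1.2.2.1).isLt
        have : q ≤ p * q := Nat.le_mul_of_pos_left q hp
        omega
      obtain ⟨ha, hl⟩ := helper1 hklt hklt' hcancel
      have hk : x.1.2.2.1 = y.1.2.2.1 := by
        have hkx := (x.1.2.2.1).isLt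
        have hky := (y.1.2.2.1).isLt
        exact Fin.ext (by omega)
      have hl' : x.1.2.2.2 = y.1.2.2.2 := Fin.ext hl
      exact Prod.ext (Prod.ext h1 (Prod.ext h2 (Prod.ext hk hl'))) h3
    calc ∑ x ∈ T, |A (x.1.1, v) (x.1.2.1, x.2)| ^ 2
        = ∑ y ∈ T.image (fun x : (Fin p × Fin q × Fin q × Fin p) × Fin sq =>
            (((x.1.1, v) : Fin p × Fin sp), ((x.1.2.1, x.2) : Fin q × Fin sq))),
            |A y.1 y.2| ^ 2 :=
            (Finset.sum_image (f := fun y : (Fin p × Fin sp) × (Fin q × Fin sq) => |A y.1 y.2| ^ 2)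
              (fun x hx y hy => hinj hx hy)).symm
      _ ≤ ∑ y : (Fin p × Fin sp) × (Fin q × Fin sq), |A y.1 y.2| ^ 2 :=
          Finset.sum_le_sum_of_subset_of_nonneg (Finset.subset_univ _)
            (fun _ _ _ => sq_nonneg _)
      _ = ∑ r, ∑ s, A r s ^ 2 := by
          rw [Fintype.sum_prod_type]
          simp [sq_abs]
  -- B-side bound
  have hBsum : ∑ x ∈ T, |B (x.1.2.2.1, x.2) (x.1.2.2.2, w)| ^ 2 ≤ ∑ r, ∑ s, B r s ^ 2 := by
    have hinj : Set.InjOn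
        (fun x : (Fin p × Fin q × Fin q × Fin p) × Fin sq =>
          (((x.1.2.2.1, x.2) : Fin q × Fin sq), ((x.1.2.2.2, w) : Fin p × Fin sp))) T := by
      intro x hx y hy hxy
      have hx1 : x.1 ∈ S := (Finset.mem_product.mp hx).1
      have hy1 : y.1 ∈ S := (Finset.mem_product.mp hy).1
      have hxc := hmemS _ hx1
      have hyc := hmemS _ hy1
      obtain ⟨hk, hc, hl⟩ : x.1.2.2.1 = y.1.2.2.1 ∧ x.2 = y.2 ∧ x.1.2.2.2 = y.1.2.2.2 := by
        have h1 := congrArg Prod.fst hxy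
        have h2 := congrArg Prod.snd hxy
        exact ⟨by simpa using congrArg Prod.fst h1, by simpa using congrArg Prod.snd h1,
          by simpa using congrArg Prod.fst h2⟩
      rw [hk, hl] at hxc
      have hcancel : q * (x.1.1 : ℕ) + (x.1.2.1 : ℕ) = q * (y.1.1 : ℕ) + (y.1.2.1 : ℕ) := by
        have h' := hxc.trans hyc.symm
        set z1 := q * ((x.1.1 : Fin p) : ℕ) with hz1
        set z2 := q * ((y.1.1 : Fin p) : ℕ) with hz2
        set u := p * q * ((y.1.2.2.2 : Fin p) : ℕ) with hu
        omega
      have hcancel' : (x.1.2.1 : ℕ) + q * (x.1.1 : ℕ) = (y.1.2.1 : ℕ) + q * (y.1.1 : ℕ) := by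
        omega
      obtain ⟨hj, hi⟩ := helper1 (x.1.2.1).isLt (y.1.2.1).isLt hcancel'
      exact Prod.ext (Prod.ext (Fin.ext hi) (Prod.ext (Fin.ext hj) (Prod.ext hk hl))) hc
    calc ∑ x ∈ T, |B (x.1.2.2.1, x.2) (x.1.2.2.2, w)| ^ 2
        = ∑ y ∈ T.image (fun x : (Fin p × Fin q × Fin q × Fin p) × Fin sq =>
            (((x.1.2.2.1, x.2) : Fin q × Fin sq), ((x.1.2.2.2, w) : Fin p × Fin sp))),
            |B y.1 y.2| ^ 2 :=
            (Finset.sum_image (f := fun y : (Fin q × Fin sq) × (Fin p × Fin sp) => |B y.1 y.2| ^ 2)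
              (fun x hx y hy => hinj hx hy)).symm
      _ ≤ ∑ y : (Fin q × Fin sq) × (Fin p × Fin sp), |B y.1 y.2| ^ 2 :=
          Finset.sum_le_sum_of_subset_of_nonneg (Finset.subset_univ _)
            (fun _ _ _ => sq_nonneg _)
      _ = ∑ r, ∑ s, B r s ^ 2 := by
          rw [Fintype.sum_prod_type]
          simp [sq_abs]
  -- combine
  rw [frobNorm] at hA hB
  have hA2 : ∑ r, ∑ s, A r s ^ 2 ≤ η ^ 2 := by
    have h0 : 0 ≤ ∑ r, ∑ s, A r s ^ 2 :=
      Finset.sum_nonneg fun _ _ => Finset.sum_nonneg fun _ _ => sq_nonneg _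
    nlinarith [Real.sq_sqrt h0, Real.sqrt_nonneg (∑ r, ∑ s, A r s ^ 2), hA]
  have hB2 : ∑ r, ∑ s, B r s ^ 2 ≤ η ^ 2 := by
    have h0 : 0 ≤ ∑ r, ∑ s, B r s ^ 2 :=
      Finset.sum_nonneg fun _ _ => Finset.sum_nonneg fun _ _ => sq_nonneg _
    nlinarith [Real.sq_sqrt h0, Real.sqrt_nonneg (∑ r, ∑ s, B r s ^ 2), hB]
  have hsum_nonneg : 0 ≤ ∑ x ∈ T, |A (x.1.1, v) (x.1.2.1, x.2)| * |B (x.1.2.2.1, x.2) (x.1.2.2.2, w)| :=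
    Finset.sum_nonneg fun _ _ => mul_nonneg (abs_nonneg _) (abs_nonneg _)
  have hfinal : (∑ x ∈ T, |A (x.1.1, v) (x.1.2.1, x.2)| * |B (x.1.2.2.1, x.2) (x.1.2.2.2, w)|) ^ 2
      ≤ (η ^ 2) ^ 2 := by
    calc _ ≤ (∑ x ∈ T, |A (x.1.1, v) (x.1.2.1, x.2)| ^ 2)
            * ∑ x ∈ T, |B (x.1.2.2.1, x.2) (x.1.2.2.2, w)| ^ 2 := hCS
      _ ≤ η ^ 2 * η ^ 2 := by
          refine mul_le_mul (hAsum.trans hA2) (hBsum.trans hB2)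
            (Finset.sum_nonneg fun _ _ => sq_nonneg _) (sq_nonneg _)
      _ = (η ^ 2) ^ 2 := by ring
  have hle : ∑ x ∈ T, |A (x.1.1, v) (x.1.2.1, x.2)| * |B (x.1.2.2.1, x.2) (x.1.2.2.2, w)| ≤ η ^ 2 := by
    nlinarith [hfinal, hsum_nonneg, sq_nonneg η]
  exact h1.trans hle
end

section
/- Suppose m divides n, A ∈ ℝ^{n×n} is partitioned into column blocks A_1,…,A_m ∈ ℝ^{n×(n/m)} and B ∈ ℝ^{n×n} into row blocks B_1,…,B_m ∈ ℝ^{(n/m)×n}. Define the matrix polynomials p_A(x) = Σ_{i=1}^{m} A_i x^{i−1} and p_B(x) = Σ_{j=1}^{m} B_j x^{m−j}. Then for every real number x, p_A(x)·p_B(x) = Σ_{l=1}^{2m−1} P_l x^{l−1}, and the middle coefficient satisfies P_m = Σ_{i=1}^{m} A_i B_i = AB. -/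
open Matrix

theorem matdot_polynomial_identity {m t : ℕ} (hm : 1 ≤ m)
    (A : Matrix (Fin (m * t)) (Fin m × Fin t) ℝ)
    (B : Matrix (Fin m × Fin t) (Fin (m * t)) ℝ) :
    (∀ x : ℝ,
      (∑ i : Fin m, x ^ (i : ℕ) • colBlk A i) * (∑ j : Fin m, x ^ (m - 1 - (j : ℕ)) • rowBlk B j)
        = ∑ l ∈ Finset.Icc 1 (2 * m - 1), x ^ (l - 1) • matDotCoeff A B l) ∧
    matDotCoeff A B m = ∑ i : Fin m, colBlk A i * rowBlk B i ∧
    matDotCoeff A B m = A * B := by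

  have h2 : matDotCoeff A B m = ∑ i : Fin m, colBlk A i * rowBlk B i := by
    unfold matDotCoeff
    refine Finset.sum_congr rfl fun i _ => ?_
    rw [Finset.sum_eq_single i]
    · rw [if_pos (by omega)]
    · intro j _ hj
      rw [if_neg]
      intro h
      exact hj (Fin.ext (by omega))
    · intro h
      exact absurd (Finset.mem_univ i) h
  have h3 : (∑ i : Fin m, colBlk A i * rowBlk B i) = A * B := by
    ext v w
    simp [Matrix.mul_apply, colBlk, rowBlk, Matrix.sum_apply, Fintype.sum_prod_type]
  refine ⟨fun x => ?_, h2, h2.trans h3⟩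
  rw [Matrix.sum_mul]
  simp_rw [Matrix.mul_sum]
  unfold matDotCoeff
  simp_rw [Finset.smul_sum]
  conv_rhs => rw [Finset.sum_comm]
  refine Finset.sum_congr rfl fun i _ => ?_
  conv_rhs => rw [Finset.sum_comm]
  refine Finset.sum_congr rfl fun j _ => ?_
  have hi := i.isLt
  have hj := j.isLt
  rw [Finset.sum_eq_single (m + i - j)]
  · rw [if_pos (by omega)]
    rw [Matrix.smul_mul, Matrix.mul_smul, smul_smul, ← pow_add]
    have he : ↑i + (m - 1 - ↑j) = m + ↑i - ↑j - 1 := by omega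
    rw [he]
  · intro l hl hne
    rw [if_neg (by omega), smul_zero]
  · intro h
    exact absurd (Finset.mem_Icc.mpr ⟨by omega, by omega⟩) h
end
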